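/- arXiv:1705.09799 — 6 statements merged into one kernel-verified Lean document; each statement's English description precedes it below -/
import Mathlib

section
/- Let E be a semi-S-factorable subset of M. Then: (i) every S-primitive element m ∈ E satisfies m ≅^S m and is in fact S-very strongly primitive; (ii) if additionally S ∩ Z(M) = ∅, then E is S-factorable. -/
namespace FactorizationPaper

variable {R : Type*} [CommRing R]

/-- `S` is a saturated multiplicatively closed subset of `R`:
it contains `1`, is closed under multiplication, and `x*y ∈ S` implies `x ∈ S` and `y ∈ S`. -/
def Saturated (S : Set R) : Prop :=
  1 ∈ S ∧ (∀ x ∈ S, ∀ y ∈ S, x * y ∈ S) ∧ ∀ x y : R, x * y ∈ S → x ∈ S ∧ y ∈ S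

/-- The submonoid of `R` associated to a saturated multiplicatively closed set. -/
def Saturated.submonoid {S : Set R} (hS : Saturated S) : Submonoid R where
  carrier := S
  one_mem' := hS.1
  mul_mem' := fun {a b} ha hb => hS.2.1 a ha b hb

section ElementDefs

variable (S : Set R) {N : Type*} [AddCommGroup N] [Module R N]

/-- `m ∼^S n` : `m` and `n` are S-associates. -/
def SAssoc (m n : N) : Prop := (∃ s ∈ S, m = s • n) ∧ (∃ s ∈ S, n = s • m)

/-- `m ≈^S n` : `m` and `n` are S-strong associates. -/
def SStrongAssoc (m n : N) : Prop := ∃ u : R, IsUnit u ∧ u ∈ S ∧ m = u • n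

/-- `m ≅^S n` : `m` and `n` are S-very strong associates. -/
def SVeryStrongAssoc (m n : N) : Prop :=
  SAssoc S m n ∧ ((m = 0 ∧ n = 0) ∨ ∀ s ∈ S, m = s • n → IsUnit s)

/-- `m` is S-primitive. -/
def SPrimitive (m : N) : Prop := ∀ s ∈ S, ∀ n : N, m = s • n → SAssoc S n m

/-- `m` is S-strongly primitive. -/
def SStronglyPrimitive (m : N) : Prop := ∀ s ∈ S, ∀ n : N, m = s • n → SStrongAssoc S n m

/-- `m` is S-very strongly primitive. -/
def SVeryStronglyPrimitive (m : N) : Prop := ∀ s ∈ S, ∀ n : N, m = s • n → SVeryStrongAssoc S n m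

/-- the three kinds of S-primitivity, indexed by `Fin 3` :
`0` = primitive, `1` = strongly primitive, `2` = very strongly primitive. -/
def PrimOf (k : Fin 3) (m : N) : Prop :=
  match k with
  | 0 => SPrimitive S m
  | 1 => SStronglyPrimitive S m
  | 2 => SVeryStronglyPrimitive S m

/-- `m = s • n` is a compact S-atomic factorization of `m`. -/
def IsCompactFactorization (m : N) (s : R) (n : N) : Prop :=
  s ∈ S ∧ SPrimitive S n ∧ m = s • n

/-- `m = s₁ ⋯ s_k • n` (with the `sᵢ` the members of the list `l`, nonunits in `S`)
is an S-factorization of `m`, of length `l.length`. -/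
def IsSFactorization (m : N) (l : List R) (n : N) : Prop :=
  (∀ s ∈ l, s ∈ S ∧ ¬ IsUnit s) ∧ m = l.prod • n

end ElementDefs

/-- `a ∼ b` : associates in `R` (i.e. S-associates with `S = R`, in `R` as an `R`-module). -/
def Assoc (a b : R) : Prop := SAssoc (Set.univ : Set R) a b

/-- `a ≈ b` : strong associates in `R`. -/
def StrongAssoc (a b : R) : Prop := SStrongAssoc (Set.univ : Set R) a b

/-- `a ≅ b` : very strong associates in `R`. -/
def VeryStrongAssoc (a b : R) : Prop := SVeryStrongAssoc (Set.univ : Set R) a b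

/-- `a` is irreducible. -/
def Irred (a : R) : Prop := ¬ IsUnit a ∧ ∀ b c : R, a = b * c → Assoc a b ∨ Assoc a c

/-- `a` is strongly irreducible. -/
def StrongIrred (a : R) : Prop :=
  ¬ IsUnit a ∧ ∀ b c : R, a = b * c → StrongAssoc a b ∨ StrongAssoc a c

/-- `a` is very strongly irreducible. -/
def VeryStrongIrred (a : R) : Prop :=
  ¬ IsUnit a ∧ ∀ b c : R, a = b * c → VeryStrongAssoc a b ∨ VeryStrongAssoc a c

/-- the three kinds of irreducibility, indexed by `Fin 3` :
`0` = irreducible, `1` = strongly irreducible, `2` = very strongly irreducible. -/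
def IrredOf (k : Fin 3) (a : R) : Prop :=
  match k with
  | 0 => Irred a
  | 1 => StrongIrred a
  | 2 => VeryStrongIrred a

section ElementDefs2

variable (S : Set R) {N : Type*} [AddCommGroup N] [Module R N]

/-- `m = s₁ ⋯ s_k • n` is an S-atomic factorization
(each `sᵢ` irreducible and in `S`, `n` S-primitive). -/
def IsSAtomicFactorization (m : N) (l : List R) (n : N) : Prop :=
  IsSFactorization S m l n ∧ (∀ s ∈ l, Irred s) ∧ SPrimitive S n

/-- an (α, β)-S-factorization: each `sᵢ` is α (a kind of irreducible)
and `n` is S-β (a kind of S-primitive). -/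
def IsABFactorization (kα kβ : Fin 3) (m : N) (l : List R) (n : N) : Prop :=
  IsSFactorization S m l n ∧ (∀ s ∈ l, IrredOf kα s) ∧ PrimOf S kβ n

/-- Isomorphism of S-atomic factorizations: same length, S-associate primitive parts,
and the irreducible parts match up to permutation and associates. -/
def FactorIso (l : List R) (n : N) (l' : List R) (n' : N) : Prop :=
  l.length = l'.length ∧ SAssoc S n n' ∧
    ∃ l'' : List R, l'.Perm l'' ∧ List.Forall₂ Assoc l l''

end ElementDefs2

section SetDefs

variable (S : Set R) {N : Type*} [AddCommGroup N] [Module R N]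

/-- `E ⊆ N` is compactly S-atomic. -/
def CompactlySAtomic (E : Set N) : Prop :=
  ∀ m ∈ E, m ≠ 0 → ∃ s n, IsCompactFactorization S m s n

/-- `E ⊆ N` is semi-S-factorable. -/
def SemiSFactorable (E : Set N) : Prop :=
  CompactlySAtomic S E ∧ ∀ m ∈ E, m ≠ 0 → ∀ s n s' n',
    IsCompactFactorization S m s n → IsCompactFactorization S m s' n' → Assoc s s'

/-- `E ⊆ N` is S-factorable. -/
def SFactorable (E : Set N) : Prop :=
  SemiSFactorable S E ∧ ∀ m ∈ E, m ≠ 0 → ∀ s n s' n',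
    IsCompactFactorization S m s n → IsCompactFactorization S m s' n' → SAssoc S n n'

/-- `S` splits `E ⊆ N`. -/
def Splits (E : Set N) : Prop :=
  SemiSFactorable S E ∧
    ∀ r : R, SPrimitive S r → ∀ m : N, SPrimitive S m →
      r • m ≠ 0 → r • m ∈ E → SPrimitive S (r • m)

end SetDefs

/-- The set of zero divisors of the module `M` in `R`. -/
def ZDiv (R : Type*) [CommRing R] (M : Type*) [AddCommGroup M] [Module R M] : Set R :=
  {r : R | ∃ m : M, m ≠ 0 ∧ r • m = 0}

/-- The annihilator of `M` in `R`, as a set. -/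
def AnnSet (R : Type*) [CommRing R] (M : Type*) [AddCommGroup M] [Module R M] : Set R :=
  {r : R | ∀ m : M, r • m = 0}

/-- The annihilator of `M` in `R`, as an ideal. -/
def AnnIdeal (R : Type*) [CommRing R] (M : Type*) [AddCommGroup M] [Module R M] : Ideal R where
  carrier := AnnSet R M
  zero_mem' := fun m => zero_smul R m
  add_mem' := fun {a b} ha hb m => by
    rw [add_smul, ha m, hb m, add_zero]
  smul_mem' := fun c x hx m => by
    rw [smul_eq_mul, mul_smul, hx m, smul_zero]

section ModuleProps

variable (S : Set R) (N : Type*) [AddCommGroup N] [Module R N]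

/-- `N` is S-présimplifiable. -/
def SPresimplifiable : Prop := ∀ s ∈ S, ∀ m : N, s • m = m → IsUnit s ∨ m = 0

/-- `N` is S-atomic. -/
def SAtomicModule : Prop := ∀ m : N, m ≠ 0 → ∃ l n, IsSAtomicFactorization S m l n

/-- `N` is (α, β)-S-atomic. -/
def ABAtomicModule (kα kβ : Fin 3) : Prop :=
  ∀ m : N, m ≠ 0 → ∃ l n, IsABFactorization S kα kβ m l n

/-- `N` is an S-UFM. -/
def SUFM : Prop := SAtomicModule S N ∧ ∀ m : N, m ≠ 0 → ∀ l n l' n',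
  IsSAtomicFactorization S m l n → IsSAtomicFactorization S m l' n' → FactorIso S l n l' n'

/-- `N` is an S-FFM. -/
def SFFM : Prop := SAtomicModule S N ∧ ∀ m : N, m ≠ 0 →
  ∃ Fs : Set (List R × N), Fs.Finite ∧
    ∀ l n, IsSAtomicFactorization S m l n → ∃ p ∈ Fs, FactorIso S l n p.1 p.2

/-- `N` is an S-BFM. -/
def SBFM : Prop := ∀ m : N, m ≠ 0 → ∃ B : ℕ,
  ∀ l n, IsSFactorization S m l n → l.length ≤ B

/-- `N` is an S-HFM. -/
def SHFM : Prop := SAtomicModule S N ∧ ∀ m : N, m ≠ 0 → ∀ l n l' n',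
  IsSAtomicFactorization S m l n → IsSAtomicFactorization S m l' n' → l.length = l'.length

end ModuleProps

section InE

variable (E : Set R)

/-- `R` is présimplifiable in `E`. -/
def PresimpIn : Prop := ∀ a ∈ E, a ≠ 0 → ¬ IsUnit a → ∀ r : R, a = r * a → IsUnit r ∨ a = 0

/-- `R` is atomic in `E`. -/
def AtomicIn : Prop := ∀ a ∈ E, a ≠ 0 → ¬ IsUnit a →
  ∃ l n, IsSAtomicFactorization (Set.univ : Set R) a l n

/-- `R` has unique factorization in `E`. -/
def UFIn : Prop := AtomicIn E ∧ ∀ a ∈ E, a ≠ 0 → ¬ IsUnit a → ∀ l n l' n',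
  IsSAtomicFactorization (Set.univ : Set R) a l n →
  IsSAtomicFactorization (Set.univ : Set R) a l' n' →
  FactorIso (Set.univ : Set R) l n l' n'

/-- `R` has finite factorization in `E`. -/
def FFIn : Prop := AtomicIn E ∧ ∀ a ∈ E, a ≠ 0 → ¬ IsUnit a →
  ∃ Fs : Set (List R × R), Fs.Finite ∧ ∀ l n,
    IsSAtomicFactorization (Set.univ : Set R) a l n →
      ∃ p ∈ Fs, FactorIso (Set.univ : Set R) l n p.1 p.2

/-- `R` is half factorial in `E`. -/
def HFIn : Prop := AtomicIn E ∧ ∀ a ∈ E, a ≠ 0 → ¬ IsUnit a → ∀ l n l' n',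
  IsSAtomicFactorization (Set.univ : Set R) a l n →
  IsSAtomicFactorization (Set.univ : Set R) a l' n' → l.length = l'.length

/-- `R` has bounded factorization in `E`. -/
def BFIn : Prop := ∀ a ∈ E, a ≠ 0 → ¬ IsUnit a →
  ∃ B : ℕ, ∀ l n, IsSFactorization (Set.univ : Set R) a l n → l.length ≤ B

end InE

/-- The set `T = S⁻¹S'` in the localization `R_S`. -/
def locT {S : Set R} (hS : Saturated S) (S' : Set R) : Set (Localization hS.submonoid) :=
  {x | ∃ s' ∈ S', ∃ t : hS.submonoid, x = Localization.mk s' t}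

section DomainDefs

variable (D : Type*) [CommRing D]

/-- two lists of ring elements agree up to order and associates. -/
def ListAssociated (l l' : List D) : Prop :=
  ∃ l'' : List D, l'.Perm l'' ∧ List.Forall₂ Associated l l''

/-- `D` is atomic: every nonzero nonunit is a finite product of irreducibles. -/
def DomAtomic : Prop := ∀ x : D, x ≠ 0 → ¬ IsUnit x →
  ∃ l : List D, (∀ a ∈ l, Irreducible a) ∧ x = l.prod

/-- `D` is a bounded factorization domain. -/
def DomBFD : Prop := ∀ x : D, x ≠ 0 → ¬ IsUnit x →
  ∃ B : ℕ, ∀ l : List D, (∀ a ∈ l, ¬ IsUnit a) → x = l.prod → l.length ≤ B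

/-- `D` is a half factorial domain. -/
def DomHFD : Prop := DomAtomic D ∧ ∀ x : D, x ≠ 0 → ¬ IsUnit x →
  ∀ l l' : List D, (∀ a ∈ l, Irreducible a) → x = l.prod →
    (∀ a ∈ l', Irreducible a) → x = l'.prod → l.length = l'.length

/-- `D` is a finite factorization domain. -/
def DomFFD : Prop := DomAtomic D ∧ ∀ x : D, x ≠ 0 → ¬ IsUnit x →
  ∃ Fs : Set (List D), Fs.Finite ∧ ∀ l : List D, (∀ a ∈ l, Irreducible a) → x = l.prod →
    ∃ l' ∈ Fs, ListAssociated D l l'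

/-- `D` is a unique factorization domain. -/
def DomUFD : Prop := DomAtomic D ∧ ∀ x : D, x ≠ 0 → ¬ IsUnit x →
  ∀ l l' : List D, (∀ a ∈ l, Irreducible a) → x = l.prod →
    (∀ a ∈ l', Irreducible a) → x = l'.prod → ListAssociated D l l'

end DomainDefs

section AXBXdefs

variable (B : Type*) [CommRing B] (A : Subring B)

/-- The ring `R = A + X·B[X]`, as a subring of `B[X]`. -/
def AXBX : Subring (Polynomial B) where
  carrier := {f | f.coeff 0 ∈ A}
  zero_mem' := by simp only [Set.mem_setOf_eq, Polynomial.coeff_zero]; exact zero_mem A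
  one_mem' := by
    simp only [Set.mem_setOf_eq, Polynomial.coeff_one, if_pos rfl]
    exact one_mem A
  add_mem' := fun {f g} hf hg => by
    simp only [Set.mem_setOf_eq, Polynomial.coeff_add] at *
    exact add_mem hf hg
  neg_mem' := fun {f} hf => by
    simp only [Set.mem_setOf_eq, Polynomial.coeff_neg] at *
    exact neg_mem hf
  mul_mem' := fun {f g} hf hg => by
    simp only [Set.mem_setOf_eq, Polynomial.mul_coeff_zero] at *
    exact mul_mem hf hg

/-- The saturated multiplicatively closed subset `S = (U(B) ∩ A) ∪ {u·Xⁿ : u ∈ U(B), n ≥ 1}`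
of `R = A + X·B[X]`. -/
def Sset : Set (AXBX B A) :=
  {f | (∃ u : B, IsUnit u ∧ u ∈ A ∧ (f : Polynomial B) = Polynomial.C u) ∨
       (∃ u : B, IsUnit u ∧ ∃ n : ℕ, 1 ≤ n ∧
          (f : Polynomial B) = Polynomial.C u * Polynomial.X ^ n)}

/-- The saturated multiplicatively closed subset `S₀ = U(B) ∩ A` of `A`. -/
def S0set : Set A := {a : A | IsUnit (a : B)}

end AXBXdefs


theorem statement0 {R : Type*} [CommRing R] {M : Type*} [AddCommGroup M] [Module R M]
    [Nontrivial M] (S : Set R) (hS : Saturated S) (E : Set M)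
    (hE : SemiSFactorable S E) :
    (∀ m ∈ E, SPrimitive S m → SVeryStrongAssoc S m m ∧ SVeryStronglyPrimitive S m) ∧
    (S ∩ ZDiv R M = ∅ → SFactorable S E) := by
  constructor
  · intro m hm hprim
    have key : ∀ s ∈ S, m = s • m → m ≠ 0 → IsUnit s := by
      intro s hs heq hm0
      have h1 : IsCompactFactorization S m 1 m := ⟨hS.1, hprim, (one_smul R m).symm⟩
      have h2 : IsCompactFactorization S m s m := ⟨hs, hprim, heq⟩
      obtain ⟨⟨r, -, hr⟩, -⟩ := hE.2 m hm hm0 1 m s m h1 h2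
      rw [smul_eq_mul] at hr
      exact isUnit_iff_exists_inv.mpr ⟨r, by rw [mul_comm]; exact hr.symm⟩
    have hmm : SVeryStrongAssoc S m m := by
      refine ⟨⟨⟨1, hS.1, (one_smul R m).symm⟩, ⟨1, hS.1, (one_smul R m).symm⟩⟩, ?_⟩
      by_cases h0 : m = 0
      · exact Or.inl ⟨h0, h0⟩
      · exact Or.inr fun s hs heq => key s hs heq h0
    refine ⟨hmm, ?_⟩
    intro s hs n heq
    have hassoc : SAssoc S n m := hprim s hs n heq
    refine ⟨hassoc, ?_⟩
    by_cases h0 : m = 0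
    · obtain ⟨⟨t, ht, htn⟩, -⟩ := hassoc
      exact Or.inl ⟨by rw [htn, h0, smul_zero], h0⟩
    · refine Or.inr fun t ht hnt => ?_
      have hst : m = (s * t) • m := by rw [mul_smul, ← hnt, ← heq]
      exact isUnit_of_mul_isUnit_right (key (s * t) (hS.2.1 s hs t ht) hst h0)
  · intro hZ
    refine ⟨hE, ?_⟩
    intro m hm hm0 s n s' n' h1 h2
    obtain ⟨hs, hn, hmsn⟩ := h1
    obtain ⟨hs', hn', hmsn'⟩ := h2
    obtain ⟨⟨a, -, ha⟩, ⟨b, -, hb⟩⟩ := hE.2 m hm hm0 s n s' n' ⟨hs, hn, hmsn⟩ ⟨hs', hn', hmsn'⟩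
    rw [smul_eq_mul] at ha hb
    have haS : a ∈ S := (hS.2.2 a s' (ha ▸ hs)).1
    have hbS : b ∈ S := (hS.2.2 b s (hb ▸ hs')).1
    have hsnz : ∀ x : M, s • x = 0 → x = 0 := by
      intro x hx
      by_contra hx0
      exact Set.eq_empty_iff_forall_notMem.mp hZ s ⟨hs, x, hx0, hx⟩
    have hs'nz : ∀ x : M, s' • x = 0 → x = 0 := by
      intro x hx
      by_contra hx0
      exact Set.eq_empty_iff_forall_notMem.mp hZ s' ⟨hs', x, hx0, hx⟩
    have e1 : n = b • n' := by
      have h : s • (n - b • n') = 0 := by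
        rw [smul_sub, ← hmsn, smul_smul, mul_comm, ← hb, ← hmsn', sub_self]
      exact sub_eq_zero.mp (hsnz _ h)
    have e2 : n' = a • n := by
      have h : s' • (n' - a • n) = 0 := by
        rw [smul_sub, ← hmsn', smul_smul, mul_comm, ← ha, ← hmsn, sub_self]
      exact sub_eq_zero.mp (hs'nz _ h)
    exact ⟨⟨b, hbS, e1⟩, ⟨a, haS, e2⟩⟩

end FactorizationPaper
end

section
/- Suppose the module M itself is semi-S-factorable (i.e., E = M is semi-S-factorable). Then R is présimplifiable in S \ Z(M), meaning: for every s ∈ S \ Z(M) and r ∈ R, s = r·s implies r ∈ U(R) or s = 0. Moreover, for elements of S \ Z(M) the three notions of irreducibility (irreducible, strongly irreducible, very strongly irreducible) coincide, and for pairs of elements of S \ Z(M) the three associate relations ∼, ≈, ≅ coincide. -/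
namespace FactorizationPaper

variable {R : Type*} [CommRing R]

theorem statement1 {R : Type*} [CommRing R] {M : Type*} [AddCommGroup M] [Module R M]
    [Nontrivial M] (S : Set R) (hS : Saturated S)
    (hM : SemiSFactorable S (Set.univ : Set M)) :
    (∀ s ∈ S \ ZDiv R M, ∀ r : R, s = r * s → IsUnit r ∨ s = 0) ∧
    (∀ a ∈ S \ ZDiv R M,
      (Irred a ↔ StrongIrred a) ∧ (Irred a ↔ VeryStrongIrred a)) ∧
    (∀ a ∈ S \ ZDiv R M, ∀ b ∈ S \ ZDiv R M,
      (Assoc a b ↔ StrongAssoc a b) ∧ (Assoc a b ↔ VeryStrongAssoc a b)) := by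
  -- Key lemma: for s ∈ S \ Z(M), s = r*s forces r to be a unit.
  have key : ∀ s ∈ S \ ZDiv R M, ∀ r : R, s = r * s → IsUnit r := by
    rintro s ⟨hsS, hsZ⟩ r hrs
    have hrS : r ∈ S := (hS.2.2 r s (by rw [← hrs]; exact hsS)).1
    obtain ⟨m, hm⟩ := exists_ne (0 : M)
    obtain ⟨t, n, htS, hnprim, hmn⟩ := hM.1 m (Set.mem_univ m) hm
    have hn0 : n ≠ 0 := by
      rintro rfl
      rw [smul_zero] at hmn
      exact hm hmn
    have hreg : ∀ x : M, s • x = 0 → x = 0 := by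
      intro x hx
      by_contra h
      exact hsZ ⟨x, h, hx⟩
    have hn : n = r • n := by
      have h0 : s • (n - r • n) = 0 := by
        rw [smul_sub, smul_smul, mul_comm s r, ← hrs, sub_self]
      have := hreg _ h0
      rw [sub_eq_zero] at this
      exact this
    have h1 : IsCompactFactorization S n 1 n := ⟨hS.1, hnprim, (one_smul R n).symm⟩
    have h2 : IsCompactFactorization S n r n := ⟨hrS, hnprim, hn⟩
    obtain ⟨⟨a, -, ha⟩, -⟩ := hM.2 n (Set.mem_univ n) hn0 1 n r n h1 h2
    rw [smul_eq_mul] at ha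
    exact IsUnit.of_mul_eq_one (a := r) a (by rw [mul_comm, ← ha])
  -- divisors of elements of S \ Z(M) are in S \ Z(M)
  have hdiv : ∀ a ∈ S \ ZDiv R M, ∀ b c : R, a = b * c → b ∈ S \ ZDiv R M := by
    rintro a ⟨haS, haZ⟩ b c habc
    refine ⟨(hS.2.2 b c (by rw [← habc]; exact haS)).1, ?_⟩
    rintro ⟨m, hm, hbm⟩
    exact haZ ⟨m, hm, by rw [habc, mul_comm, mul_smul, hbm, smul_zero]⟩
  -- associates coincide on pairs from S \ Z(M)
  have hassoc : ∀ a ∈ S \ ZDiv R M, ∀ b ∈ S \ ZDiv R M,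
      (Assoc a b ↔ StrongAssoc a b) ∧ (Assoc a b ↔ VeryStrongAssoc a b) := by
    intro a ha b hb
    have fwd : Assoc a b → StrongAssoc a b ∧ VeryStrongAssoc a b := by
      rintro ⟨⟨x, -, hx⟩, ⟨y, -, hy⟩⟩
      rw [smul_eq_mul] at hx hy
      have hxy : IsUnit (x * y) := by
        refine key a ha (x * y) ?_
        rw [mul_assoc, ← hy, ← hx]
      have hxu : IsUnit x := isUnit_of_mul_isUnit_left hxy
      refine ⟨⟨x, hxu, Set.mem_univ x, by rw [smul_eq_mul]; exact hx⟩,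
        ⟨⟨⟨x, Set.mem_univ x, by rw [smul_eq_mul]; exact hx⟩,
          ⟨y, Set.mem_univ y, by rw [smul_eq_mul]; exact hy⟩⟩, Or.inr ?_⟩⟩
      intro u _ hu
      rw [smul_eq_mul] at hu
      exact isUnit_of_mul_isUnit_left (key a ha (u * y)
        (by rw [mul_assoc, ← hy, ← hu]))
    have b1 : StrongAssoc a b → Assoc a b := by
      rintro ⟨u, hu, -, hab⟩
      rw [smul_eq_mul] at hab
      obtain ⟨v, hv⟩ := hu
      refine ⟨⟨u, Set.mem_univ u, by rw [smul_eq_mul]; exact hab⟩,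
        ⟨(v⁻¹ : Rˣ), Set.mem_univ _, ?_⟩⟩
      rw [smul_eq_mul, hab, ← hv, ← mul_assoc, Units.inv_mul, one_mul]
    have b2 : VeryStrongAssoc a b → Assoc a b := fun h => h.1
    exact ⟨⟨fun h => (fwd h).1, b1⟩, ⟨fun h => (fwd h).2, b2⟩⟩
  refine ⟨fun s hs r hrs => Or.inl (key s hs r hrs), ?_, hassoc⟩
  intro a ha
  have fwd : Irred a → StrongIrred a ∧ VeryStrongIrred a := by
    rintro ⟨hau, hairr⟩
    constructor
    · refine ⟨hau, fun b c habc => ?_⟩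
      rcases hairr b c habc with h | h
      · exact Or.inl (((hassoc a ha b (hdiv a ha b c habc)).1).mp h)
      · exact Or.inr (((hassoc a ha c (hdiv a ha c b (by rw [habc, mul_comm]))).1).mp h)
    · refine ⟨hau, fun b c habc => ?_⟩
      rcases hairr b c habc with h | h
      · exact Or.inl (((hassoc a ha b (hdiv a ha b c habc)).2).mp h)
      · exact Or.inr (((hassoc a ha c (hdiv a ha c b (by rw [habc, mul_comm]))).2).mp h)
  have sa : ∀ x y : R, StrongAssoc x y → Assoc x y := by
    rintro x y ⟨u, hu, -, hxy⟩
    rw [smul_eq_mul] at hxy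
    obtain ⟨v, hv⟩ := hu
    refine ⟨⟨u, Set.mem_univ u, by rw [smul_eq_mul]; exact hxy⟩,
      ⟨(v⁻¹ : Rˣ), Set.mem_univ _, ?_⟩⟩
    rw [smul_eq_mul, hxy, ← hv, ← mul_assoc, Units.inv_mul, one_mul]
  have b1 : StrongIrred a → Irred a := by
    rintro ⟨hau, h⟩
    exact ⟨hau, fun b c habc => (h b c habc).imp (sa a b) (sa a c)⟩
  have b2 : VeryStrongIrred a → Irred a := by
    rintro ⟨hau, h⟩
    exact ⟨hau, fun b c habc => (h b c habc).imp (fun h' => h'.1) (fun h' => h'.1)⟩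
  exact ⟨⟨fun h => (fwd h).1, b1⟩, ⟨fun h => (fwd h).2, b2⟩⟩

end FactorizationPaper
end

section
/- Suppose M is semi-S-factorable and S ∩ Z(M) = ∅. Then: M is S-présimplifiable iff R is présimplifiable in S \ Ann(M); M is an S-UFM iff R has unique factorization in S \ Ann(M); M is an S-FFM iff R has finite factorization in S \ Ann(M); M is an S-HFM iff R is half factorial in S \ Ann(M); M is an S-BFM iff R has bounded factorization in S \ Ann(M); and M is S-atomic iff R is atomic in S \ Ann(M). -/
namespace FactorizationPaper

variable {R : Type*} [CommRing R]

section AuxLemmas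

variable {R : Type*} [CommRing R] {M : Type*} [AddCommGroup M] [Module R M] {S : Set R}

lemma mk_sassoc {N : Type*} [AddCommGroup N] [Module R N] {m n : N} {s s' : R}
    (hs : s ∈ S) (hs' : s' ∈ S) (h1 : m = s • n) (h2 : n = s' • m) : SAssoc S m n :=
  ⟨⟨s, hs, h1⟩, ⟨s', hs', h2⟩⟩

lemma aux_assoc_units {a b : R} (ha : IsUnit a) (hb : IsUnit b) : Assoc a b := by
  obtain ⟨u, rfl⟩ := ha
  obtain ⟨v, rfl⟩ := hb
  refine mk_sassoc (S := (Set.univ : Set R)) trivial trivial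
    (s := (u : R) * ((v⁻¹ : Rˣ) : R)) (s' := (v : R) * ((u⁻¹ : Rˣ) : R)) ?_ ?_ <;>
    rw [smul_eq_mul, mul_assoc, Units.inv_mul, mul_one]

lemma aux_reg (hZ : S ∩ ZDiv R M = ∅) {s : R} (hs : s ∈ S) {x : M} (hx : s • x = 0) :
    x = 0 := by
  by_contra h
  rw [Set.eq_empty_iff_forall_notMem] at hZ
  exact hZ s ⟨hs, x, h, hx⟩

lemma aux_prod_mem (hS : Saturated S) : ∀ {l : List R}, (∀ s ∈ l, s ∈ S) → l.prod ∈ S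
  | [], _ => by simpa using hS.1
  | a :: l, h => by
    rw [List.prod_cons]
    exact hS.2.1 a (h a List.mem_cons_self) _
      (aux_prod_mem hS fun s hs => h s (List.mem_cons_of_mem a hs))

lemma aux_mem_of_prod_mul (hS : Saturated S) :
    ∀ {l : List R} {u : R}, l.prod * u ∈ S → (∀ s ∈ l, s ∈ S) ∧ u ∈ S
  | [], u, h => ⟨fun s hs => absurd hs List.not_mem_nil,
      by rwa [List.prod_nil, one_mul] at h⟩
  | a :: l, u, h => by
    rw [List.prod_cons, mul_assoc] at h
    have h1 := hS.2.2 a (l.prod * u) h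
    have h2 := aux_mem_of_prod_mul hS h1.2
    refine ⟨fun s hs => ?_, h2.2⟩
    rcases List.mem_cons.mp hs with rfl | hs
    · exact h1.1
    · exact h2.1 s hs

lemma aux_inv_mem (hS : Saturated S) {u : Rˣ} (hu : (u : R) ∈ S) :
    ((u⁻¹ : Rˣ) : R) ∈ S := by
  have h : (u : R) * ((u⁻¹ : Rˣ) : R) ∈ S := by rw [Units.mul_inv]; exact hS.1
  exact (hS.2.2 _ _ h).2

lemma aux_unit_smul_prim (hS : Saturated S) {u : R} (hu : IsUnit u) (huS : u ∈ S)
    {n : M} (hn : SPrimitive S n) : SPrimitive S (u • n) := by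
  obtain ⟨v, rfl⟩ := hu
  intro s hs x hx
  have hinv := aux_inv_mem hS huS
  have hn' : n = (((v⁻¹ : Rˣ) : R) * s) • x := by
    rw [mul_smul, ← hx, smul_smul, Units.inv_mul, one_smul]
  have hA := hn _ (hS.2.1 _ hinv _ hs) x hn'
  obtain ⟨σ, hσS, hσ⟩ := hA.1
  obtain ⟨σ', hσ'S, hσ'⟩ := hA.2
  refine mk_sassoc (hS.2.1 _ hσS _ hinv) (hS.2.1 _ huS _ hσ'S)
    (s := σ * ((v⁻¹ : Rˣ) : R)) (s' := (v : R) * σ') ?_ ?_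
  · rw [smul_smul, mul_assoc, Units.inv_mul, mul_one]; exact hσ
  · rw [mul_smul, ← hσ']

lemma aux_lemmaU (hS : Saturated S) (hM : SemiSFactorable S (Set.univ : Set M))
    {n : M} (hn0 : n ≠ 0) (hn : SPrimitive S n) {c : R} (hc : c ∈ S) (h : n = c • n) :
    IsUnit c := by
  have h1 : IsCompactFactorization S n 1 n := ⟨hS.1, hn, (one_smul R n).symm⟩
  have h2 : IsCompactFactorization S n c n := ⟨hc, hn, h⟩
  have hA := hM.2 n trivial hn0 1 n c n h1 h2
  obtain ⟨s, -, hs⟩ := hA.1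
  rw [smul_eq_mul] at hs
  exact IsUnit.of_mul_eq_one (a := c) s (by rw [mul_comm]; exact hs.symm)

lemma aux_unit_univPrim {u : R} (hu : IsUnit u) : SPrimitive (Set.univ : Set R) u := by
  intro s _ b hb
  rw [smul_eq_mul] at hb
  exact aux_assoc_units (isUnit_of_mul_isUnit_right (hb ▸ hu)) hu

lemma aux_univPrim_unit {n : R} (h : SPrimitive (Set.univ : Set R) n) : IsUnit n := by
  have hA := h n trivial 1 (by rw [smul_eq_mul, mul_one])
  obtain ⟨s, -, hs⟩ := hA.1
  rw [smul_eq_mul] at hs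
  exact IsUnit.of_mul_eq_one (a := n) s (by rw [mul_comm]; exact hs.symm)

lemma aux_nil_of_unit_prod : ∀ {l : List R}, (∀ s ∈ l, ¬IsUnit s) → IsUnit l.prod → l = []
  | [], _, _ => rfl
  | a :: l, h, hu => by
    rw [List.prod_cons] at hu
    exact absurd (isUnit_of_mul_isUnit_left hu) (h a List.mem_cons_self)

lemma aux_lift (hS : Saturated S) {a : R} (ha : a ∈ S) {n₀ : M} (hn₀ : SPrimitive S n₀)
    {l : List R} {u : R} (h : IsSAtomicFactorization (Set.univ : Set R) a l u) :
    IsSAtomicFactorization S (a • n₀) l (u • n₀) ∧ IsUnit u ∧ u ∈ S := by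
  have hl := h.1.1
  have hprod := h.1.2
  rw [smul_eq_mul] at hprod
  have huu : IsUnit u := aux_univPrim_unit h.2.2
  have hmem := aux_mem_of_prod_mul hS (hprod ▸ ha)
  exact ⟨⟨⟨fun s hs => ⟨hmem.1 s hs, (hl s hs).2⟩, by rw [hprod, mul_smul]⟩,
    h.2.1, aux_unit_smul_prim hS huu hmem.2 hn₀⟩, huu, hmem.2⟩

lemma aux_liftFac (hS : Saturated S) {a : R} (ha : a ∈ S) (n₀ : M)
    {l : List R} {u : R} (h : IsSFactorization (Set.univ : Set R) a l u) :
    IsSFactorization S (a • n₀) l (u • n₀) := by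
  have hl := h.1
  have hprod := h.2
  rw [smul_eq_mul] at hprod
  have hmem := aux_mem_of_prod_mul hS (hprod ▸ ha)
  exact ⟨fun s hs => ⟨hmem.1 s hs, (hl s hs).2⟩, by rw [hprod, mul_smul]⟩

lemma aux_main (hS : Saturated S) (hM : SemiSFactorable S (Set.univ : Set M))
    (hZ : S ∩ ZDiv R M = ∅) {t : R} (ht : t ∈ S) {n : M} (hn : SPrimitive S n)
    (hne : t • n ≠ 0) {l : List R} {n' : M}
    (h : IsSAtomicFactorization S (t • n) l n') :
    ∃ c : R, IsUnit c ∧ c ∈ S ∧ t = l.prod * c ∧ n' = c • n := by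
  have hl := h.1.1
  have hprod := h.1.2
  have hprim := h.2.2
  have hn0 : n ≠ 0 := fun h0 => hne (by rw [h0, smul_zero])
  have hpS : l.prod ∈ S := aux_prod_mem hS fun s hs => (hl s hs).1
  have hc1 : IsCompactFactorization S (t • n) t n := ⟨ht, hn, rfl⟩
  have hc2 : IsCompactFactorization S (t • n) l.prod n' := ⟨hpS, hprim, hprod⟩
  have hA := hM.2 (t • n) trivial hne t n l.prod n' hc1 hc2
  obtain ⟨c, -, hc⟩ := hA.1
  obtain ⟨c', -, hc'⟩ := hA.2
  rw [smul_eq_mul] at hc hc'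
  have hcS : c ∈ S := (hS.2.2 c l.prod (hc ▸ ht)).1
  have hc'S : c' ∈ S := (hS.2.2 c' t (hc' ▸ hpS)).1
  have hn' : n' = c • n := by
    have e1 : l.prod • n' = l.prod • (c • n) := by
      rw [← hprod, hc, mul_comm, mul_smul]
    have h0 := aux_reg hZ hpS (x := n' - c • n) (by rw [smul_sub, e1, sub_self])
    rwa [sub_eq_zero] at h0
  have e2 : t • n = t • ((c' * c) • n) := by
    rw [hprod, hn', smul_smul, hc', smul_smul]
    congr 1
    ring
  have hnn : n = (c' * c) • n := by
    have h0 := aux_reg hZ ht (x := n - (c' * c) • n) (by rw [smul_sub, ← e2, sub_self])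
    rwa [sub_eq_zero] at h0
  have hu := aux_lemmaU hS hM hn0 hn (hS.2.1 c' hc'S c hcS) hnn
  exact ⟨c, isUnit_of_mul_isUnit_right hu, hcS, by rw [hc, mul_comm], hn'⟩

end AuxLemmas

theorem statement2 {R : Type*} [CommRing R] {M : Type*} [AddCommGroup M] [Module R M]
    [Nontrivial M] (S : Set R) (hS : Saturated S)
    (hM : SemiSFactorable S (Set.univ : Set M)) (hZ : S ∩ ZDiv R M = ∅) :
    (SPresimplifiable S M ↔ PresimpIn (S \ AnnSet R M)) ∧
    (SUFM S M ↔ UFIn (S \ AnnSet R M)) ∧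
    (SFFM S M ↔ FFIn (S \ AnnSet R M)) ∧
    (SHFM S M ↔ HFIn (S \ AnnSet R M)) ∧
    (SBFM S M ↔ BFIn (S \ AnnSet R M)) ∧
    (SAtomicModule S M ↔ AtomicIn (S \ AnnSet R M)) := by
  classical
  have hSAnn : S \ AnnSet R M = S := by
    ext s
    refine ⟨fun h => h.1, fun hs => ⟨hs, fun hann => ?_⟩⟩
    obtain ⟨m, hm⟩ := exists_ne (0 : M)
    rw [Set.eq_empty_iff_forall_notMem] at hZ
    exact hZ s ⟨hs, m, hm, hann m⟩
  rw [hSAnn]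
  obtain ⟨m₀, hm₀⟩ := exists_ne (0 : M)
  obtain ⟨t₀, n₀, ht₀S, hn₀, hm₀eq⟩ := hM.1 m₀ trivial hm₀
  have hn₀0 : n₀ ≠ 0 := fun h0 => hm₀ (by rw [hm₀eq, h0, smul_zero])
  have hsmul_ne : ∀ {a : R}, a ∈ S → a • n₀ ≠ 0 := fun {a} ha h0 => hn₀0 (aux_reg hZ ha h0)
  -- atomicity transfer
  have atomF : SAtomicModule S M → AtomicIn S := by
    intro hat a haS ha0 hanu
    obtain ⟨l, n', hfac⟩ := hat (a • n₀) (hsmul_ne haS)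
    obtain ⟨c, hcu, hcS, hac, -⟩ := aux_main hS hM hZ haS hn₀ (hsmul_ne haS) hfac
    exact ⟨l, c, ⟨⟨fun s hs => ⟨trivial, (hfac.1.1 s hs).2⟩,
      by rw [smul_eq_mul]; exact hac⟩, hfac.2.1, aux_unit_univPrim hcu⟩⟩
  have atomB : AtomicIn S → SAtomicModule S M := by
    intro hat m hm
    obtain ⟨t, nc, htS, hnc, heq⟩ := hM.1 m trivial hm
    by_cases hut : IsUnit t
    · refine ⟨[], m, ⟨⟨fun s hs => absurd hs List.not_mem_nil,
        by rw [List.prod_nil, one_smul]⟩,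
        fun s hs => absurd hs List.not_mem_nil, ?_⟩⟩
      rw [heq]
      exact aux_unit_smul_prim hS hut htS hnc
    · have ht0 : t ≠ 0 := fun h0 => hm (by rw [heq, h0, zero_smul])
      obtain ⟨l, u, hfacR⟩ := hat t htS ht0 hut
      obtain ⟨hfacM, -, -⟩ := aux_lift hS htS hnc hfacR
      exact ⟨l, u • nc, by rwa [heq]⟩
  -- présimplifiability (both sides hold outright)
  have hpresimpM : SPresimplifiable S M := by
    intro s hsS m hsm
    by_cases hm : m = 0
    · exact Or.inr hm
    · left
      obtain ⟨t, nc, htS, hnc, heq⟩ := hM.1 m trivial hm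
      have hnc0 : nc ≠ 0 := fun h0 => hm (by rw [heq, h0, smul_zero])
      have hkey : nc = s • nc := by
        have e : t • nc = t • (s • nc) := by
          rw [smul_comm t s nc, ← heq]
          exact hsm.symm
        have h0 := aux_reg hZ htS (x := nc - s • nc) (by rw [smul_sub, ← e, sub_self])
        rwa [sub_eq_zero] at h0
      exact aux_lemmaU hS hM hnc0 hnc hsS hkey
  have hpresimpR : PresimpIn S := by
    intro a haS ha0 hanu r har
    left
    have e : a • n₀ = a • (r • n₀) := by rw [smul_smul, mul_comm a r, ← har]
    have h0 := aux_reg hZ haS (x := n₀ - r • n₀) (by rw [smul_sub, ← e, sub_self])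
    rw [sub_eq_zero] at h0
    have hrS : r ∈ S := (hS.2.2 r a (har ▸ haS)).1
    exact aux_lemmaU hS hM hn₀0 hn₀ hrS h0
  refine ⟨iff_of_true hpresimpM hpresimpR, ?_, ?_, ?_, ?_, ⟨atomF, atomB⟩⟩
  · -- UFM
    constructor
    · rintro ⟨hat, hu⟩
      refine ⟨atomF hat, ?_⟩
      intro a haS ha0 hanu l n l' n' h h'
      obtain ⟨hfacM, hun, -⟩ := aux_lift hS haS hn₀ h
      obtain ⟨hfacM', hun', -⟩ := aux_lift hS haS hn₀ h'
      have hiso := hu (a • n₀) (hsmul_ne haS) l (n • n₀) l' (n' • n₀) hfacM hfacM'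
      exact ⟨hiso.1, aux_assoc_units hun hun', hiso.2.2⟩
    · rintro ⟨hatR, huR⟩
      refine ⟨atomB hatR, ?_⟩
      intro m hm l n l' n' h h'
      obtain ⟨t, nc, htS, hnc, heq⟩ := hM.1 m trivial hm
      rw [heq] at h h' hm
      obtain ⟨c, hcu, hcS, hac, hnc1⟩ := aux_main hS hM hZ htS hnc hm h
      obtain ⟨c', hc'u, hc'S, hac', hnc2⟩ := aux_main hS hM hZ htS hnc hm h'
      obtain ⟨v, rfl⟩ := hcu
      obtain ⟨v', rfl⟩ := hc'u
      have hassoc : SAssoc S n n' := by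
        refine mk_sassoc (hS.2.1 _ hcS _ (aux_inv_mem hS hc'S))
          (hS.2.1 _ hc'S _ (aux_inv_mem hS hcS))
          (s := (v : R) * ((v'⁻¹ : Rˣ) : R)) (s' := (v' : R) * ((v⁻¹ : Rˣ) : R)) ?_ ?_
        · rw [hnc1, hnc2, smul_smul, mul_assoc, Units.inv_mul, mul_one]
        · rw [hnc1, hnc2, smul_smul, mul_assoc, Units.inv_mul, mul_one]
      by_cases hut : IsUnit t
      · have hl : l = [] := aux_nil_of_unit_prod (fun s hs => (h.1.1 s hs).2)
          (isUnit_of_mul_isUnit_left (hac ▸ hut))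
        have hl' : l' = [] := aux_nil_of_unit_prod (fun s hs => (h'.1.1 s hs).2)
          (isUnit_of_mul_isUnit_left (hac' ▸ hut))
        subst hl; subst hl'
        exact ⟨rfl, hassoc, [], List.Perm.refl [], List.Forall₂.nil⟩
      · have ht0 : t ≠ 0 := fun h0 => hm (by rw [h0, zero_smul])
        have hfr : IsSAtomicFactorization (Set.univ : Set R) t l ((v : R)) :=
          ⟨⟨fun s hs => ⟨trivial, (h.1.1 s hs).2⟩, by rw [smul_eq_mul]; exact hac⟩,
            h.2.1, aux_unit_univPrim v.isUnit⟩
        have hfr' : IsSAtomicFactorization (Set.univ : Set R) t l' ((v' : R)) :=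
          ⟨⟨fun s hs => ⟨trivial, (h'.1.1 s hs).2⟩, by rw [smul_eq_mul]; exact hac'⟩,
            h'.2.1, aux_unit_univPrim v'.isUnit⟩
        have hiso := huR t htS ht0 hut l ((v : R)) l' ((v' : R)) hfr hfr'
        exact ⟨hiso.1, hassoc, hiso.2.2⟩
  · -- FFM
    constructor
    · rintro ⟨hat, hff⟩
      refine ⟨atomF hat, ?_⟩
      intro a haS ha0 hanu
      obtain ⟨Fs, hfin, hcov⟩ := hff (a • n₀) (hsmul_ne haS)
      refine ⟨(fun p => (p.1, (1 : R))) '' Fs, hfin.image _, ?_⟩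
      intro l u hfac
      obtain ⟨hfacM, huu, -⟩ := aux_lift hS haS hn₀ hfac
      obtain ⟨p, hp, hiso⟩ := hcov l (u • n₀) hfacM
      exact ⟨(p.1, 1), ⟨p, hp, rfl⟩, hiso.1, aux_assoc_units huu isUnit_one, hiso.2.2⟩
    · rintro ⟨hatR, hffR⟩
      refine ⟨atomB hatR, ?_⟩
      intro m hm
      obtain ⟨t, nc, htS, hnc, heq⟩ := hM.1 m trivial hm
      rw [heq] at hm ⊢
      by_cases hut : IsUnit t
      · refine ⟨{([], t • nc)}, Set.finite_singleton _, ?_⟩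
        intro l n hfac
        obtain ⟨c, hcu, hcS, hac, hnceq⟩ := aux_main hS hM hZ htS hnc hm hfac
        have hl : l = [] := aux_nil_of_unit_prod (fun s hs => (hfac.1.1 s hs).2)
          (isUnit_of_mul_isUnit_left (hac ▸ hut))
        subst hl
        have hnm : n = t • nc := by
          have h1 := hfac.1.2
          rw [List.prod_nil, one_smul] at h1
          exact h1.symm
        refine ⟨([], t • nc), rfl, rfl, ?_, [], List.Perm.refl [], List.Forall₂.nil⟩
        rw [hnm]
        exact mk_sassoc hS.1 hS.1 (one_smul R _).symm (one_smul R _).symm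
      · have ht0 : t ≠ 0 := fun h0 => hm (by rw [h0, zero_smul])
        obtain ⟨FsR, hfin, hcov⟩ := hffR t htS ht0 hut
        refine ⟨(fun p => (p.1, p.2 • nc)) '' FsR, hfin.image _, ?_⟩
        intro l n hfac
        obtain ⟨c, hcu, hcS, hac, hnceq⟩ := aux_main hS hM hZ htS hnc hm hfac
        obtain ⟨p, hp, hiso⟩ := hcov l c
          ⟨⟨fun s hs => ⟨trivial, (hfac.1.1 s hs).2⟩, by rw [smul_eq_mul]; exact hac⟩,
            hfac.2.1, aux_unit_univPrim hcu⟩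
        obtain ⟨σ, -, hσ⟩ := hiso.2.1.1
        obtain ⟨σ', -, hσ'⟩ := hiso.2.1.2
        rw [smul_eq_mul] at hσ hσ'
        have hσS : σ ∈ S := (hS.2.2 σ p.2 (hσ ▸ hcS)).1
        have hp2S : p.2 ∈ S := (hS.2.2 σ p.2 (hσ ▸ hcS)).2
        have hσ'S : σ' ∈ S := (hS.2.2 σ' c (hσ' ▸ hp2S)).1
        refine ⟨(p.1, p.2 • nc), ⟨p, hp, rfl⟩, hiso.1, ?_, hiso.2.2⟩
        refine mk_sassoc hσS hσ'S ?_ ?_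
        · rw [hnceq, hσ, mul_smul]
        · rw [hnceq, hσ', mul_smul]
  · -- HFM
    constructor
    · rintro ⟨hat, hh⟩
      refine ⟨atomF hat, ?_⟩
      intro a haS ha0 hanu l n l' n' h h'
      obtain ⟨hfacM, -, -⟩ := aux_lift hS haS hn₀ h
      obtain ⟨hfacM', -, -⟩ := aux_lift hS haS hn₀ h'
      exact hh (a • n₀) (hsmul_ne haS) l (n • n₀) l' (n' • n₀) hfacM hfacM'
    · rintro ⟨hatR, hhR⟩
      refine ⟨atomB hatR, ?_⟩
      intro m hm l n l' n' h h'
      obtain ⟨t, nc, htS, hnc, heq⟩ := hM.1 m trivial hm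
      rw [heq] at h h' hm
      obtain ⟨c, hcu, hcS, hac, -⟩ := aux_main hS hM hZ htS hnc hm h
      obtain ⟨c', hc'u, hc'S, hac', -⟩ := aux_main hS hM hZ htS hnc hm h'
      by_cases hut : IsUnit t
      · rw [aux_nil_of_unit_prod (fun s hs => (h.1.1 s hs).2)
            (isUnit_of_mul_isUnit_left (hac ▸ hut)),
          aux_nil_of_unit_prod (fun s hs => (h'.1.1 s hs).2)
            (isUnit_of_mul_isUnit_left (hac' ▸ hut))]
      · have ht0 : t ≠ 0 := fun h0 => hm (by rw [h0, zero_smul])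
        exact hhR t htS ht0 hut l c l' c'
          ⟨⟨fun s hs => ⟨trivial, (h.1.1 s hs).2⟩, by rw [smul_eq_mul]; exact hac⟩,
            h.2.1, aux_unit_univPrim hcu⟩
          ⟨⟨fun s hs => ⟨trivial, (h'.1.1 s hs).2⟩, by rw [smul_eq_mul]; exact hac'⟩,
            h'.2.1, aux_unit_univPrim hc'u⟩
  · -- BFM
    constructor
    · intro hbf a haS ha0 hanu
      obtain ⟨B, hB⟩ := hbf (a • n₀) (hsmul_ne haS)
      exact ⟨B, fun l u hfac => hB l (u • n₀) (aux_liftFac hS haS n₀ hfac)⟩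
    · intro hbfR m hm
      obtain ⟨t, nc, htS, hnc, heq⟩ := hM.1 m trivial hm
      rw [heq] at hm ⊢
      by_cases hut : IsUnit t
      · refine ⟨0, fun l n hfac => ?_⟩
        have hprim : SPrimitive S (t • nc) := aux_unit_smul_prim hS hut htS hnc
        have hl := hfac.1
        have hprod := hfac.2
        have hplS : l.prod ∈ S := aux_prod_mem hS fun s hs => (hl s hs).1
        obtain ⟨σ, hσS, hσ⟩ := (hprim l.prod hplS n hprod).1
        have hEq : t • nc = (l.prod * σ) • (t • nc) := by
          rw [mul_smul, ← hσ]; exact hprod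
        have hu := aux_lemmaU hS hM hm hprim (hS.2.1 _ hplS _ hσS) hEq
        have hl0 : l = [] := aux_nil_of_unit_prod (fun s hs => (hl s hs).2)
          (isUnit_of_mul_isUnit_left hu)
        simp [hl0]
      · have ht0 : t ≠ 0 := fun h0 => hm (by rw [h0, zero_smul])
        obtain ⟨B, hB⟩ := hbfR t htS ht0 hut
        refine ⟨B, fun l n hfac => ?_⟩
        have hl := hfac.1
        have hprod := hfac.2
        have hn0 : n ≠ 0 := fun h0 => hm (by rw [hprod, h0, smul_zero])
        obtain ⟨t'', n₂, ht''S, hn₂, hneq⟩ := hM.1 n trivial hn0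
        have hplS : l.prod ∈ S := aux_prod_mem hS fun s hs => (hl s hs).1
        have hcomp : IsCompactFactorization S (t • nc) (l.prod * t'') n₂ :=
          ⟨hS.2.1 _ hplS _ ht''S, hn₂, by rw [mul_smul, ← hneq]; exact hprod⟩
        have hcomp0 : IsCompactFactorization S (t • nc) t nc := ⟨htS, hnc, rfl⟩
        have hA := hM.2 (t • nc) trivial hm t nc (l.prod * t'') n₂ hcomp0 hcomp
        obtain ⟨c, -, hc⟩ := hA.1
        rw [smul_eq_mul] at hc
        refine hB l (c * t'') ⟨fun s hs => ⟨trivial, (hl s hs).2⟩, ?_⟩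
        rw [smul_eq_mul, hc]
        ring


end FactorizationPaper
end

section
/- If M is semi-S-factorable and S ∩ Z(M) = ∅, then M is S-présimplifiable. -/
namespace FactorizationPaper

variable {R : Type*} [CommRing R]

theorem statement3 {R : Type*} [CommRing R] {M : Type*} [AddCommGroup M] [Module R M]
    [Nontrivial M] (S : Set R) (hS : Saturated S)
    (hM : SemiSFactorable S (Set.univ : Set M)) (hZ : S ∩ ZDiv R M = ∅) :
    SPresimplifiable S M := by
  intro s hs m hsm
  by_cases hm0 : m = 0
  · exact Or.inr hm0
  left
  -- get a compact factorization m = t • n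
  obtain ⟨t, n, ht, hprim, hmn⟩ := hM.1 m (Set.mem_univ m) hm0
  have hn0 : n ≠ 0 := by
    rintro rfl
    exact hm0 (by simpa using hmn)
  -- s • n = n, since t is not a zero divisor on M
  have hsn : s • n = n := by
    have hkill : t • (s • n - n) = 0 := by
      have : s • (t • n) = t • n := by rw [← hmn]; exact hsm
      rw [smul_sub, smul_comm t s n, this, sub_self]
    by_contra hne
    have htZ : t ∈ ZDiv R M := ⟨s • n - n, fun h => hne (by rwa [sub_eq_zero] at h), hkill⟩
    exact Set.eq_empty_iff_forall_notMem.mp hZ t ⟨ht, htZ⟩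
  -- two compact factorizations of n : n = 1 • n and n = s • n
  have h1 : IsCompactFactorization S n 1 n := ⟨hS.1, hprim, (one_smul R n).symm⟩
  have h2 : IsCompactFactorization S n s n := ⟨hs, hprim, hsn.symm⟩
  have hassoc : Assoc (1 : R) s := hM.2 n (Set.mem_univ n) hn0 1 n s n h1 h2
  obtain ⟨⟨r, -, hr⟩, -⟩ := hassoc
  exact IsUnit.of_mul_eq_one (a := s) r (by rw [mul_comm]; exact hr.symm)

end FactorizationPaper
end

section
/- Suppose S splits M, S' is a saturated multiplicatively closed subset of R, and S' \ Ann(M) is compactly S-atomic (as a subset of the R-module R). Then S splits S' \ Ann(M) (as a subset of the R-module R). Moreover, if S' = R, then S splits the R-module R/Ann(M) (i.e., S splits the subset E = R/Ann(M) of the R-module R/Ann(M)). -/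
namespace FactorizationPaper

variable {R : Type*} [CommRing R]

section Statement5Aux

variable {R : Type*} [CommRing R] {M : Type*} [AddCommGroup M] [Module R M]
variable {S : Set R}

lemma exists_prim_y (hsplit : Splits S (Set.univ : Set M)) {b : R}
    (hb : b ∉ AnnSet R M) : ∃ y : M, SPrimitive S y ∧ b • y ≠ 0 := by
  have hx : ∃ x : M, b • x ≠ 0 := by
    by_contra h
    push_neg at h
    exact hb h
  obtain ⟨x, hx⟩ := hx
  have hx0 : x ≠ 0 := by rintro rfl; simp at hx
  obtain ⟨t, y, ht, hyprim, hxy⟩ := hsplit.1.1 x (Set.mem_univ x) hx0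
  refine ⟨y, hyprim, fun h => hx ?_⟩
  rw [hxy, smul_smul, mul_comm, ← smul_smul, h, smul_zero]

lemma key_unit (hS : Saturated S) (hsplit : Splits S (Set.univ : Set M))
    {a s c : R} {y : M} (hay : a • y ≠ 0) (hprim : SPrimitive S (a • y))
    (hs : s ∈ S) (heq : a • y = s • (c • y)) : ∃ w ∈ S, w * s = 1 := by
  have hcy : c • y ≠ 0 := by intro h; rw [h, smul_zero] at heq; exact hay heq
  obtain ⟨t, z, ht, hz, hcz⟩ := hsplit.1.1 (c • y) (Set.mem_univ _) hcy
  have h1 : IsCompactFactorization S (a • y) 1 (a • y) :=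
    ⟨hS.1, hprim, (one_smul R _).symm⟩
  have h2 : IsCompactFactorization S (a • y) (s * t) z :=
    ⟨hS.2.1 s hs t ht, hz, by rw [heq, hcz, smul_smul]⟩
  obtain ⟨⟨u, -, hu⟩, -⟩ :=
    hsplit.1.2 (a • y) (Set.mem_univ _) hay 1 (a • y) (s * t) z h1 h2
  rw [smul_eq_mul] at hu
  refine ⟨t * u, ?_, by linear_combination -hu⟩
  have h1S : s * (t * u) ∈ S := by
    rw [show s * (t * u) = u * (s * t) by ring, ← hu]; exact hS.1
  exact (hS.2.2 s (t * u) h1S).2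

lemma claimR (hS : Saturated S) (hsplit : Splits S (Set.univ : Set M))
    {b : R} (y : M) (hay : b • y ≠ 0) (hprim : SPrimitive S (b • y)) :
    SPrimitive S b := by
  intro s hs n hbn
  rw [smul_eq_mul] at hbn
  have heq : b • y = s • (n • y) := by rw [hbn, mul_smul]
  obtain ⟨w, hw, hws⟩ := key_unit hS hsplit hay hprim hs heq
  refine ⟨⟨w, hw, ?_⟩, ⟨s, hs, by rw [smul_eq_mul, hbn]⟩⟩
  rw [smul_eq_mul, hbn]
  linear_combination (-n) * hws

lemma claimQ (hS : Saturated S) (hsplit : Splits S (Set.univ : Set M))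
    {b : R} (y : M) (hay : b • y ≠ 0) (hprim : SPrimitive S (b • y)) :
    SPrimitive S (Submodule.Quotient.mk (p := AnnIdeal R M) b) := by
  intro s hs nbar hbn
  obtain ⟨c, rfl⟩ := Submodule.Quotient.mk_surjective _ nbar
  have hmem : b - s • c ∈ AnnIdeal R M := by
    rw [← Submodule.Quotient.eq, hbn, Submodule.Quotient.mk_smul]
  have h0 : (b - s • c) • y = 0 := hmem y
  have heq : b • y = s • (c • y) := by
    rw [sub_smul, sub_eq_zero] at h0
    rw [h0, smul_eq_mul, mul_smul]
  obtain ⟨w, hw, hws⟩ := key_unit hS hsplit hay hprim hs heq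
  refine ⟨⟨w, hw, ?_⟩, ⟨s, hs, hbn⟩⟩
  rw [← Submodule.Quotient.mk_smul, Submodule.Quotient.eq]
  have hc : c - w • b = (-w) • (b - s • c) := by
    simp only [smul_eq_mul, neg_mul]
    linear_combination (-c) * hws
  rw [hc]
  exact Submodule.smul_mem _ _ hmem

lemma claimE (hS : Saturated S) (hsplit : Splits S (Set.univ : Set M))
    (hcompact : CompactlySAtomic S ((Set.univ : Set R) \ AnnSet R M))
    {mbar : R ⧸ AnnIdeal R M} (h0 : mbar ≠ 0) (hprim : SPrimitive S mbar) :
    ∃ t c, t ∈ S ∧ IsUnit t ∧ c ∉ AnnSet R M ∧ SPrimitive S c ∧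
      mbar = t • Submodule.Quotient.mk c := by
  obtain ⟨m, rfl⟩ := Submodule.Quotient.mk_surjective _ mbar
  have hm : m ∉ AnnSet R M := fun h => h0 ((Submodule.Quotient.mk_eq_zero _).mpr h)
  have hm0 : m ≠ 0 := by rintro rfl; exact hm fun x => zero_smul R x
  obtain ⟨t, c, ht, hcprim, hmc⟩ := hcompact m ⟨Set.mem_univ _, hm⟩ hm0
  rw [smul_eq_mul] at hmc
  have hc : c ∉ AnnSet R M := fun h => hm (fun x => by
    rw [hmc, mul_smul, h x, smul_zero])
  have hmk : Submodule.Quotient.mk (p := AnnIdeal R M) m = t • Submodule.Quotient.mk c := by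
    rw [← Submodule.Quotient.mk_smul, smul_eq_mul, hmc]
  obtain ⟨⟨u, hu, huc⟩, -⟩ := hprim t ht _ hmk
  have hmem : c - u • m ∈ AnnIdeal R M := by
    rw [← Submodule.Quotient.eq, huc, Submodule.Quotient.mk_smul]
  obtain ⟨y, hyprim, hcy⟩ := exists_prim_y hsplit hc
  have pcy := hsplit.2 c hcprim y hyprim hcy (Set.mem_univ _)
  have h0' : (c - u • m) • y = 0 := hmem y
  have heq : c • y = (u * t) • (c • y) := by
    rw [sub_smul, sub_eq_zero] at h0'
    rw [smul_eq_mul, hmc] at h0'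
    conv_lhs => rw [h0', show u * (t * c) = (u * t) * c by ring, mul_smul]
  obtain ⟨w, hw, hwut⟩ := key_unit hS hsplit hcy pcy (hS.2.1 u hu t ht) heq
  exact ⟨t, c, ht, IsUnit.of_mul_eq_one (a := t) (w * u) (by linear_combination hwut),
    hc, hcprim, hmk⟩

lemma unit_smul_prim (hS : Saturated S) {t : R} (ht : t ∈ S) (htu : IsUnit t)
    {z : M} (hz : SPrimitive S z) : SPrimitive S (t • z) := by
  obtain ⟨v, hv⟩ := htu.exists_left_inv
  have hvS : v ∈ S := (hS.2.2 v t (by rw [hv]; exact hS.1)).1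
  intro s hs p hp
  have hzp : z = (v * s) • p := by
    rw [mul_smul, ← hp, smul_smul, hv, one_smul]
  obtain ⟨⟨u1, hu1, e1⟩, ⟨u2, hu2, e2⟩⟩ := hz (v * s) (hS.2.1 v hvS s hs) p hzp
  refine ⟨⟨u1 * v, hS.2.1 u1 hu1 v hvS, ?_⟩, ⟨t * u2, hS.2.1 t ht u2 hu2, ?_⟩⟩
  · rw [e1, smul_smul, mul_assoc, hv, mul_one]
  · rw [mul_smul, ← e2]

end Statement5Aux


theorem statement5 {R : Type*} [CommRing R] {M : Type*} [AddCommGroup M] [Module R M]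
    [Nontrivial M] (S S' : Set R) (hS : Saturated S) (hS' : Saturated S')
    (hsplit : Splits S (Set.univ : Set M))
    (hcompact : CompactlySAtomic S (S' \ AnnSet R M)) :
    Splits S (S' \ AnnSet R M) ∧
    (S' = Set.univ → Splits S (Set.univ : Set (R ⧸ AnnIdeal R M))) := by
  constructor
  · refine ⟨⟨hcompact, ?_⟩, ?_⟩
    · rintro a ⟨-, haAnn⟩ ha0 s n s' n' ⟨hs, hnprim, heq⟩ ⟨hs', hn'prim, heq'⟩
      rw [smul_eq_mul] at heq heq'
      obtain ⟨y, hyprim, hay⟩ := exists_prim_y hsplit haAnn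
      have hay1 : a • y = s • (n • y) := by rw [heq, mul_smul]
      have hay2 : a • y = s' • (n' • y) := by rw [heq', mul_smul]
      have hny : n • y ≠ 0 := fun h => hay (by rw [hay1, h, smul_zero])
      have hn'y : n' • y ≠ 0 := fun h => hay (by rw [hay2, h, smul_zero])
      have p1 := hsplit.2 n hnprim y hyprim hny (Set.mem_univ _)
      have p2 := hsplit.2 n' hn'prim y hyprim hn'y (Set.mem_univ _)
      exact hsplit.1.2 (a • y) (Set.mem_univ _) hay s (n • y) s' (n' • y)
        ⟨hs, p1, hay1⟩ ⟨hs', p2, hay2⟩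
    · intro r hr m hm hne hmem
      obtain ⟨y, hyprim, hay⟩ := exists_prim_y hsplit hmem.2
      have key : (r • m) • y = r • (m • y) := by rw [smul_eq_mul, mul_smul]
      have hmy : m • y ≠ 0 := fun h => hay (by rw [key, h, smul_zero])
      have pmy := hsplit.2 m hm y hyprim hmy (Set.mem_univ _)
      have hrmy : r • (m • y) ≠ 0 := by rw [← key]; exact hay
      have prmy := hsplit.2 r hr (m • y) pmy hrmy (Set.mem_univ _)
      exact claimR hS hsplit y hay (by rw [key]; exact prmy)
  · rintro rfl
    refine ⟨⟨?_, ?_⟩, ?_⟩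
    · rintro mbar - h0
      obtain ⟨m, rfl⟩ := Submodule.Quotient.mk_surjective _ mbar
      have hm : m ∉ AnnSet R M := fun h => h0 ((Submodule.Quotient.mk_eq_zero _).mpr h)
      have hm0 : m ≠ 0 := by rintro rfl; exact hm fun x => zero_smul R x
      obtain ⟨s, n, hs, hn, hmn⟩ := hcompact m ⟨Set.mem_univ _, hm⟩ hm0
      rw [smul_eq_mul] at hmn
      have hnAnn : n ∉ AnnSet R M := fun h => hm (fun x => by
        rw [hmn, mul_smul, h x, smul_zero])
      obtain ⟨y, hyprim, hny⟩ := exists_prim_y hsplit hnAnn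
      have pny := hsplit.2 n hn y hyprim hny (Set.mem_univ _)
      exact ⟨s, Submodule.Quotient.mk n, hs, claimQ hS hsplit y hny pny,
        by rw [← Submodule.Quotient.mk_smul, smul_eq_mul, hmn]⟩
    · rintro abar - ha0 s nbar s' nbar' ⟨hs, hnprim, heq⟩ ⟨hs', hn'prim, heq'⟩
      have hn0 : nbar ≠ 0 := fun h => ha0 (by rw [heq, h, smul_zero])
      have hn'0 : nbar' ≠ 0 := fun h => ha0 (by rw [heq', h, smul_zero])
      obtain ⟨t, c, ht, htu, hcAnn, hcprim, hnc⟩ := claimE hS hsplit hcompact hn0 hnprim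
      obtain ⟨t', c', ht', ht'u, hc'Ann, hc'prim, hn'c⟩ := claimE hS hsplit hcompact hn'0 hn'prim
      obtain ⟨a, rfl⟩ := Submodule.Quotient.mk_surjective _ abar
      have haAnn : a ∉ AnnSet R M := fun h => ha0 ((Submodule.Quotient.mk_eq_zero _).mpr h)
      obtain ⟨y, hyprim, hay⟩ := exists_prim_y hsplit haAnn
      have hmem : a - (s * t) • c ∈ AnnIdeal R M := by
        rw [← Submodule.Quotient.eq, Submodule.Quotient.mk_smul, ← smul_smul, ← hnc, ← heq]
      have hmem' : a - (s' * t') • c' ∈ AnnIdeal R M := by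
        rw [← Submodule.Quotient.eq, Submodule.Quotient.mk_smul, ← smul_smul, ← hn'c, ← heq']
      have h1 : (a - (s * t) • c) • y = 0 := hmem y
      have h2 : (a - (s' * t') • c') • y = 0 := hmem' y
      rw [sub_smul, sub_eq_zero] at h1 h2
      have hay1 : a • y = (s * t) • (c • y) := by rw [h1, smul_eq_mul, mul_smul]
      have hay2 : a • y = (s' * t') • (c' • y) := by rw [h2, smul_eq_mul, mul_smul]
      have hcy : c • y ≠ 0 := fun h => hay (by rw [hay1, h, smul_zero])
      have hc'y : c' • y ≠ 0 := fun h => hay (by rw [hay2, h, smul_zero])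
      have pcy := hsplit.2 c hcprim y hyprim hcy (Set.mem_univ _)
      have pc'y := hsplit.2 c' hc'prim y hyprim hc'y (Set.mem_univ _)
      obtain ⟨⟨p, -, hp⟩, ⟨q, -, hq⟩⟩ :=
        hsplit.1.2 (a • y) (Set.mem_univ _) hay (s * t) (c • y) (s' * t') (c' • y)
          ⟨hS.2.1 s hs t ht, pcy, hay1⟩ ⟨hS.2.1 s' hs' t' ht', pc'y, hay2⟩
      rw [smul_eq_mul] at hp hq
      obtain ⟨v, hv⟩ := htu.exists_left_inv
      obtain ⟨v', hv'⟩ := ht'u.exists_left_inv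
      exact ⟨⟨v * p * t', Set.mem_univ _, by rw [smul_eq_mul]; linear_combination v * hp - s * hv⟩,
        ⟨v' * q * t, Set.mem_univ _, by rw [smul_eq_mul]; linear_combination v' * hq - s' * hv'⟩⟩
    · rintro r hr mbar hmbar hne -
      have hm0 : mbar ≠ 0 := fun h => hne (by rw [h, smul_zero])
      obtain ⟨t, c, ht, htu, hcAnn, hcprim, hmc⟩ := claimE hS hsplit hcompact hm0 hmbar
      have hrm : r • mbar = Submodule.Quotient.mk (p := AnnIdeal R M) (r * (t * c)) := by
        rw [hmc, smul_smul, ← Submodule.Quotient.mk_smul, smul_eq_mul, mul_assoc]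
      have hbAnn : r * (t * c) ∉ AnnSet R M := fun h =>
        hne (by rw [hrm]; exact (Submodule.Quotient.mk_eq_zero _).mpr h)
      obtain ⟨y, hyprim, hby⟩ := exists_prim_y hsplit hbAnn
      have e1 : (r * (t * c)) • y = t • (r • (c • y)) := by
        rw [mul_smul, mul_smul, smul_smul, mul_comm r t, ← smul_smul]
      have hcy : c • y ≠ 0 := fun h => hby (by rw [e1, h, smul_zero, smul_zero])
      have pcy := hsplit.2 c hcprim y hyprim hcy (Set.mem_univ _)
      have hrcy : r • (c • y) ≠ 0 := fun h => hby (by rw [e1, h, smul_zero])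
      have prcy := hsplit.2 r hr (c • y) pcy hrcy (Set.mem_univ _)
      have pby : SPrimitive S ((r * (t * c)) • y) := by
        rw [e1]; exact unit_smul_prim hS ht htu prcy
      rw [hrm]
      exact claimQ hS hsplit y hby pby


end FactorizationPaper
end

section
/- Suppose S ⊆ S' are saturated multiplicatively closed subsets of R, S splits E = S' \ Ann(M) (as a subset of the R-module R), and S ∩ Z(M) = S ∩ Z(R) = ∅. Let α be one of: irreducible, strongly irreducible, very strongly irreducible, let r ∈ E \ S, and let r = s·a be a compact S-atomic factorization of r (s ∈ S, a ∈ R S-primitive). Then the image r/1 of r in the localization R_S is α (as an element of R_S) if and only if a is α in R. -/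
namespace FactorizationPaper

variable {R : Type*} [CommRing R]

section Aux6

variable {R : Type*} [CommRing R] {M : Type*} [AddCommGroup M] [Module R M]

lemma sat_unit_mem {S : Set R} (hS : Saturated S) {u : R} (hu : IsUnit u) : u ∈ S := by
  obtain ⟨v, rfl⟩ := hu
  exact (hS.2.2 _ _ (by rw [v.mul_inv]; exact hS.1)).1

lemma sat_nzd {S : Set R} (hZR : S ∩ ZDiv R R = ∅) {s : R} (hs : s ∈ S) :
    ∀ x : R, s * x = 0 → x = 0 := by
  intro x hx
  by_contra h
  exact Set.eq_empty_iff_forall_notMem.mp hZR s ⟨hs, x, h, by simpa [smul_eq_mul] using hx⟩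

lemma ann_not_mul {x y : R} (h : x * y ∉ AnnSet R M) :
    x ∉ AnnSet R M ∧ y ∉ AnnSet R M := by
  constructor
  · intro hx; exact h fun m => by rw [mul_comm, mul_smul, hx m, smul_zero]
  · intro hy; exact h fun m => by rw [mul_smul, hy m, smul_zero]

lemma ann_mul_right {y : R} (x : R) (hy : y ∈ AnnSet R M) : x * y ∈ AnnSet R M :=
  fun m => by rw [mul_smul, hy m, smul_zero]

lemma memE_of_mul {S' : Set R} (hS' : Saturated S') {x y : R}
    (h : x * y ∈ S' \ AnnSet R M) :
    x ∈ S' \ AnnSet R M ∧ y ∈ S' \ AnnSet R M := by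
  obtain ⟨h1, h2⟩ := h
  obtain ⟨hx, hy⟩ := hS'.2.2 x y h1
  obtain ⟨hx', hy'⟩ := ann_not_mul (M := M) h2
  exact ⟨⟨hx, hx'⟩, ⟨hy, hy'⟩⟩

lemma mul_memE {S S' : Set R} (hSS' : S ⊆ S') (hS' : Saturated S')
    (hZM : S ∩ ZDiv R M = ∅) {t a : R} (ht : t ∈ S) (ha : a ∈ S' \ AnnSet R M) :
    t * a ∈ S' \ AnnSet R M := by
  refine ⟨hS'.2.1 t (hSS' ht) a ha.1, ?_⟩
  intro h
  apply ha.2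
  intro m
  have htZ : t ∉ ZDiv R M := fun hz => Set.eq_empty_iff_forall_notMem.mp hZM t ⟨ht, hz⟩
  have : t • (a • m) = 0 := by rw [← mul_smul]; exact h m
  by_contra ham
  exact htZ ⟨a • m, ham, this⟩

end Aux6
section Aux6b

variable {R : Type*} [CommRing R] {M : Type*} [AddCommGroup M] [Module R M]
variable {S : Set R}

lemma loc_surj (hS : Saturated S) (x : Localization hS.submonoid) :
    ∃ (a : R) (s : hS.submonoid), x = Localization.mk a s :=
  Localization.induction_on x fun y => ⟨y.1, y.2, rfl⟩

lemma loc_ext (hS : Saturated S) (hZR : S ∩ ZDiv R R = ∅) {a b : R} {s t : hS.submonoid}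
    (h : Localization.mk a s = Localization.mk b t) : (t : R) * a = (s : R) * b := by
  rw [Localization.mk_eq_mk_iff, Localization.r_iff_exists] at h
  obtain ⟨c, hc⟩ := h
  have hcS : (c : R) ∈ S := c.2
  have h0 := sat_nzd hZR hcS ((t : R) * a - (s : R) * b) (by rw [mul_sub, hc, sub_self])
  exact sub_eq_zero.mp h0

lemma loc_ext' (hS : Saturated S) (hZR : S ∩ ZDiv R R = ∅) {a b : R} {t : hS.submonoid}
    (h : algebraMap R (Localization hS.submonoid) a = Localization.mk b t) :
    (t : R) * a = b := by
  rw [← Localization.mk_one_eq_algebraMap] at h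
  simpa using loc_ext hS hZR h

lemma loc_inj (hS : Saturated S) (hZR : S ∩ ZDiv R R = ∅) {a b : R}
    (h : algebraMap R (Localization hS.submonoid) a = algebraMap R (Localization hS.submonoid) b) :
    a = b := by
  rw [← Localization.mk_one_eq_algebraMap (M := hS.submonoid) b] at h
  simpa using loc_ext' hS hZR h

lemma loc_ne_zero (hS : Saturated S) (hZR : S ∩ ZDiv R R = ∅) {a : R} (ha : a ≠ 0) :
    algebraMap R (Localization hS.submonoid) a ≠ 0 := by
  intro h
  exact ha (loc_inj hS hZR (by rw [h, map_zero]))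

lemma unit_mk_iff (hS : Saturated S) (hZR : S ∩ ZDiv R R = ∅) {d : R} {t : hS.submonoid} :
    IsUnit (Localization.mk d t) ↔ d ∈ S := by
  constructor
  · intro h
    obtain ⟨x, hx⟩ := h.exists_right_inv
    obtain ⟨e, t₃, rfl⟩ := loc_surj hS x
    rw [Localization.mk_mul, ← Localization.mk_one] at hx
    have := loc_ext hS hZR hx
    simp only [Submonoid.coe_one, Submonoid.coe_mul, one_mul, mul_one] at this
    -- this : d * e = (t * t₃ : R)
    have hmem : (t : R) * (t₃ : R) ∈ S := hS.2.1 _ t.2 _ t₃.2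
    rw [← this] at hmem
    exact (hS.2.2 _ _ hmem).1
  · intro hd
    apply IsUnit.of_mul_eq_one (Localization.mk (t : R) ⟨d, hd⟩)
    rw [Localization.mk_mul, ← Localization.mk_one, Localization.mk_eq_mk_iff,
      Localization.r_iff_exists]
    exact ⟨1, by push_cast; ring⟩

lemma unit_map_iff (hS : Saturated S) (hZR : S ∩ ZDiv R R = ∅) {d : R} :
    IsUnit (algebraMap R (Localization hS.submonoid) d) ↔ d ∈ S := by
  rw [← Localization.mk_one_eq_algebraMap]
  exact unit_mk_iff hS hZR

end Aux6b
section Aux6c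

variable {R : Type*} [CommRing R] {M : Type*} [AddCommGroup M] [Module R M]

lemma prim_unit_mul {S : Set R} (hS : Saturated S) {b u : R}
    (hb : SPrimitive S b) (hu : IsUnit u) : SPrimitive S (u * b) := by
  obtain ⟨v, rfl⟩ := hu
  intro s hs n hn
  rw [smul_eq_mul] at hn
  have hb' : b = s • ((v⁻¹ : Rˣ) * n) := by
    rw [smul_eq_mul]
    calc b = (v⁻¹ : Rˣ) * (v * b) := by rw [Units.inv_mul_cancel_left]
    _ = s * ((v⁻¹ : Rˣ) * n) := by rw [hn]; ring
  obtain ⟨⟨σ, hσ, h1⟩, ⟨τ, hτ, h2⟩⟩ := hb s hs _ hb'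
  rw [smul_eq_mul] at h1 h2
  constructor
  · refine ⟨σ, hσ, ?_⟩
    rw [smul_eq_mul]
    calc n = (v : R) * ((v⁻¹ : Rˣ) * n) := by rw [Units.mul_inv_cancel_left]
    _ = (v : R) * (σ * b) := by rw [← h1]
    _ = σ * ((v : R) * b) := by ring
  · refine ⟨τ, hτ, ?_⟩
    rw [smul_eq_mul]
    calc (v : R) * b = (v : R) * (τ * ((v⁻¹ : Rˣ) * n)) := by rw [← h2]
    _ = τ * ((v : R) * (v⁻¹ : Rˣ) * n) := by ring
    _ = τ * n := by rw [Units.mul_inv]; ring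

lemma prim_S_unit {S : Set R} {d : R} (hd : d ∈ S) (hp : SPrimitive S d) : IsUnit d := by
  obtain ⟨⟨σ, hσ, h1⟩, -⟩ := hp d hd 1 (by rw [smul_eq_mul, mul_one])
  rw [smul_eq_mul] at h1
  exact IsUnit.of_mul_eq_one (a := d) σ (by rw [mul_comm]; exact h1.symm)

lemma unit_of_compact {S S' : Set R} (hS : Saturated S)
    (hsplit : Splits S (S' \ AnnSet R M))
    {a z n : R} (ha : a ∈ S' \ AnnSet R M) (ha0 : a ≠ 0) (hap : SPrimitive S a)
    (hz : z ∈ S) (hnp : SPrimitive S n) (heq : a = z * n) : IsUnit z := by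
  have h := hsplit.1.2 a ha ha0 1 a z n ⟨hS.1, hap, (one_smul R a).symm⟩
    ⟨hz, hnp, by rw [smul_eq_mul]; exact heq⟩
  obtain ⟨⟨p, -, hp⟩, -⟩ := h
  rw [smul_eq_mul] at hp
  exact IsUnit.of_mul_eq_one (a := z) p (by rw [mul_comm]; exact hp.symm)

lemma lemK {S S' : Set R} (hS : Saturated S) (hS' : Saturated S') (hSS' : S ⊆ S')
    (hsplit : Splits S (S' \ AnnSet R M))
    (hZM : S ∩ ZDiv R M = ∅) (hZR : S ∩ ZDiv R R = ∅)
    {x d e t : R} (hx : x ∈ S' \ AnnSet R M) (hx0 : x ≠ 0) (hxp : SPrimitive S x)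
    (he' : e ∈ S') (hep : SPrimitive S e) (ht : t ∈ S) (heq : t * x = d * e) :
    ∃ z d', z ∈ S ∧ SPrimitive S d' ∧ x = (z * d') * e ∧ d = (z * t) * d' := by
  have htx0 : t * x ≠ 0 := fun h => hx0 (sat_nzd hZR ht x h)
  have htxE : t * x ∈ S' \ AnnSet R M := mul_memE hSS' hS' hZM ht hx
  have hdeE : d * e ∈ S' \ AnnSet R M := heq ▸ htxE
  have hd0 : d ≠ 0 := by rintro rfl; rw [zero_mul] at heq; exact htx0 heq
  have hdE := (memE_of_mul hS' hdeE).1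
  obtain ⟨s₄, d', hs₄, hd'p, hdd⟩ := hsplit.1.1 d hdE hd0
  rw [smul_eq_mul] at hdd
  have hd'S' : d' ∈ S' := (hS'.2.2 s₄ d' (hdd ▸ hdE.1)).2
  have hd'e0 : d' * e ≠ 0 := by
    intro h
    apply htx0
    rw [heq, hdd, mul_assoc, h, mul_zero]
  have hd'eE : d' * e ∈ S' \ AnnSet R M := by
    refine ⟨hS'.2.1 _ hd'S' _ he', ?_⟩
    intro h
    exact hdeE.2 (by rw [hdd, mul_assoc]; exact ann_mul_right s₄ h)
  have hd'ep : SPrimitive S (d' * e) := by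
    have := hsplit.2 d' hd'p e hep (by rw [smul_eq_mul]; exact hd'e0)
      (by rw [smul_eq_mul]; exact hd'eE)
    rwa [smul_eq_mul] at this
  have hAssoc := hsplit.1.2 (t * x) htxE htx0 t x s₄ (d' * e)
    ⟨ht, hxp, rfl⟩
    ⟨hs₄, hd'ep, by rw [smul_eq_mul, heq, hdd]; try ring⟩
  obtain ⟨-, ⟨z, -, hz⟩⟩ := hAssoc
  rw [smul_eq_mul] at hz
  have hzS : z ∈ S := (hS.2.2 z t (by rw [← hz]; exact hs₄)).1
  refine ⟨z, d', hzS, hd'p, ?_, ?_⟩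
  · have h0 : t * (x - (z * d') * e) = 0 := by
      have : t * x = (z * t * d') * e := by rw [heq, hdd, hz]
      rw [mul_sub, this]; try ring
    have := sat_nzd hZR ht _ h0
    exact sub_eq_zero.mp this
  · rw [hdd, hz]

end Aux6c
section Aux6d

variable {R : Type*} [CommRing R] {M : Type*} [AddCommGroup M] [Module R M]
variable {S S' : Set R}

/-- From divisibility in the localization, divisibility in `R`. -/
lemma transfer_dvd (hS : Saturated S) (hS' : Saturated S') (hSS' : S ⊆ S')
    (hsplit : Splits S (S' \ AnnSet R M))
    (hZM : S ∩ ZDiv R M = ∅) (hZR : S ∩ ZDiv R R = ∅)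
    {a b : R} (ha : a ∈ S' \ AnnSet R M) (ha0 : a ≠ 0) (hap : SPrimitive S a)
    (hb' : b ∈ S') (hbp : SPrimitive S b) {Z : Localization hS.submonoid}
    (h : algebraMap R (Localization hS.submonoid) a
        = Z * algebraMap R (Localization hS.submonoid) b) :
    ∃ p : R, a = p * b := by
  obtain ⟨d, t, rfl⟩ := loc_surj hS Z
  rw [← Localization.mk_one_eq_algebraMap b, Localization.mk_mul, mul_one] at h
  have hh := loc_ext' hS hZR h
  obtain ⟨z, d', -, -, hx, -⟩ := lemK hS hS' hSS' hsplit hZM hZR ha ha0 hap hb' hbp t.2 hh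
  exact ⟨z * d', hx⟩

/-- Transfer: divisibility in localization with a unit witness of S-numer. -/
lemma transfer_strong (hS : Saturated S) (hS' : Saturated S') (hSS' : S ⊆ S')
    (hsplit : Splits S (S' \ AnnSet R M))
    (hZM : S ∩ ZDiv R M = ∅) (hZR : S ∩ ZDiv R R = ∅)
    {a b : R} (ha : a ∈ S' \ AnnSet R M) (ha0 : a ≠ 0) (hap : SPrimitive S a)
    (hb' : b ∈ S') (hbp : SPrimitive S b) {Z : Localization hS.submonoid} (hZ : IsUnit Z)
    (h : algebraMap R (Localization hS.submonoid) a
        = Z * algebraMap R (Localization hS.submonoid) b) :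
    ∃ p : R, IsUnit p ∧ a = p * b := by
  obtain ⟨d, t, rfl⟩ := loc_surj hS Z
  have hdS : d ∈ S := (unit_mk_iff hS hZR).mp hZ
  rw [← Localization.mk_one_eq_algebraMap b, Localization.mk_mul, mul_one] at h
  have hh := loc_ext' hS hZR h
  obtain ⟨z, d', hzS, hd'p, hx, hd⟩ := lemK hS hS' hSS' hsplit hZM hZR ha ha0 hap hb' hbp t.2 hh
  -- hd : d = (z * t) * d', d ∈ S ⇒ d' ∈ S ⇒ d' unit
  have hd'S : d' ∈ S := (hS.2.2 _ _ (hd ▸ hdS)).2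
  have hd'u : IsUnit d' := prim_S_unit hd'S hd'p
  have hdbp : SPrimitive S (d' * b) := prim_unit_mul hS hbp hd'u
  have hzu : IsUnit z := unit_of_compact hS hsplit ha ha0 hap hzS hdbp (by rw [hx]; ring)
  exact ⟨z * d', hzu.mul hd'u, hx⟩

lemma transfer_assoc (hS : Saturated S) (hS' : Saturated S') (hSS' : S ⊆ S')
    (hsplit : Splits S (S' \ AnnSet R M))
    (hZM : S ∩ ZDiv R M = ∅) (hZR : S ∩ ZDiv R R = ∅)
    {a b : R} (ha : a ∈ S' \ AnnSet R M) (ha0 : a ≠ 0) (hap : SPrimitive S a)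
    (hb : b ∈ S' \ AnnSet R M) (hb0 : b ≠ 0) (hbp : SPrimitive S b)
    (h : Assoc (algebraMap R (Localization hS.submonoid) a)
        (algebraMap R (Localization hS.submonoid) b)) :
    Assoc a b := by
  obtain ⟨⟨Z, -, h1⟩, ⟨W, -, h2⟩⟩ := h
  rw [smul_eq_mul] at h1 h2
  obtain ⟨p, hp⟩ := transfer_dvd hS hS' hSS' hsplit hZM hZR ha ha0 hap hb.1 hbp h1
  obtain ⟨q, hq⟩ := transfer_dvd hS hS' hSS' hsplit hZM hZR hb hb0 hbp ha.1 hap h2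
  exact ⟨⟨p, trivial, by rw [smul_eq_mul]; exact hp⟩, ⟨q, trivial, by rw [smul_eq_mul]; exact hq⟩⟩

lemma transfer_strongassoc (hS : Saturated S) (hS' : Saturated S') (hSS' : S ⊆ S')
    (hsplit : Splits S (S' \ AnnSet R M))
    (hZM : S ∩ ZDiv R M = ∅) (hZR : S ∩ ZDiv R R = ∅)
    {a b : R} (ha : a ∈ S' \ AnnSet R M) (ha0 : a ≠ 0) (hap : SPrimitive S a)
    (hb : b ∈ S' \ AnnSet R M) (hbp : SPrimitive S b)
    (h : StrongAssoc (algebraMap R (Localization hS.submonoid) a)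
        (algebraMap R (Localization hS.submonoid) b)) :
    StrongAssoc a b := by
  obtain ⟨Z, hZu, -, h1⟩ := h
  rw [smul_eq_mul] at h1
  obtain ⟨p, hpu, hp⟩ := transfer_strong hS hS' hSS' hsplit hZM hZR ha ha0 hap hb.1 hbp hZu h1
  exact ⟨p, hpu, trivial, by rw [smul_eq_mul]; exact hp⟩

lemma transfer_vsassoc (hS : Saturated S) (hS' : Saturated S') (hSS' : S ⊆ S')
    (hsplit : Splits S (S' \ AnnSet R M))
    (hZM : S ∩ ZDiv R M = ∅) (hZR : S ∩ ZDiv R R = ∅)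
    {a b : R} (ha : a ∈ S' \ AnnSet R M) (ha0 : a ≠ 0) (hap : SPrimitive S a)
    (hb : b ∈ S' \ AnnSet R M) (hb0 : b ≠ 0) (hbp : SPrimitive S b)
    (h : VeryStrongAssoc (algebraMap R (Localization hS.submonoid) a)
        (algebraMap R (Localization hS.submonoid) b)) :
    VeryStrongAssoc a b := by
  refine ⟨transfer_assoc hS hS' hSS' hsplit hZM hZR ha ha0 hap hb hb0 hbp h.1, Or.inr ?_⟩
  intro s _ hs
  rw [smul_eq_mul] at hs
  have hmap : algebraMap R (Localization hS.submonoid) a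
      = algebraMap R (Localization hS.submonoid) s • algebraMap R (Localization hS.submonoid) b := by
    rw [smul_eq_mul, ← map_mul, hs]
  have h2 := h.2
  rcases h2 with ⟨h0, -⟩ | hall
  · exact absurd (loc_inj hS hZR (by rw [h0, map_zero])) ha0
  · have hsu := hall _ trivial hmap
    have hsS : s ∈ S := (unit_map_iff hS hZR).mp hsu
    exact unit_of_compact hS hsplit ha ha0 hap hsS hbp hs

/-- both factors of a factorization of a nonzero S-primitive element of `E` are S-primitive. -/
lemma factor_prim (hS : Saturated S) (hS' : Saturated S') (hSS' : S ⊆ S')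
    (hsplit : Splits S (S' \ AnnSet R M))
    (hZM : S ∩ ZDiv R M = ∅) (hZR : S ∩ ZDiv R R = ∅)
    {a b c : R} (ha : a ∈ S' \ AnnSet R M) (ha0 : a ≠ 0) (hap : SPrimitive S a)
    (h : a = b * c) : SPrimitive S b ∧ SPrimitive S c := by
  have hbcE : b * c ∈ S' \ AnnSet R M := h ▸ ha
  obtain ⟨hbE, hcE⟩ := memE_of_mul hS' hbcE
  have hb0 : b ≠ 0 := by rintro rfl; rw [zero_mul] at h; exact ha0 h
  have hc0 : c ≠ 0 := by rintro rfl; rw [mul_zero] at h; exact ha0 h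
  obtain ⟨s₁, b', hs₁, hb'p, hb'⟩ := hsplit.1.1 b hbE hb0
  obtain ⟨s₂, c', hs₂, hc'p, hc'⟩ := hsplit.1.1 c hcE hc0
  rw [smul_eq_mul] at hb' hc'
  have hb'S' : b' ∈ S' := (hS'.2.2 s₁ b' (hb' ▸ hbE.1)).2
  have hc'S' : c' ∈ S' := (hS'.2.2 s₂ c' (hc' ▸ hcE.1)).2
  have hkey : a = (s₁ * s₂) * (b' * c') := by rw [h, hb', hc']; ring
  have hbc'0 : b' * c' ≠ 0 := by
    intro h0
    apply ha0
    rw [hkey, h0, mul_zero]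
  have hbc'E : b' * c' ∈ S' \ AnnSet R M := by
    refine ⟨hS'.2.1 _ hb'S' _ hc'S', ?_⟩
    intro h0
    exact ha.2 (by rw [hkey]; exact ann_mul_right _ h0)
  have hbc'p : SPrimitive S (b' * c') := by
    have := hsplit.2 b' hb'p c' hc'p (by rw [smul_eq_mul]; exact hbc'0)
      (by rw [smul_eq_mul]; exact hbc'E)
    rwa [smul_eq_mul] at this
  have hsu : IsUnit (s₁ * s₂) :=
    unit_of_compact hS hsplit ha ha0 hap (hS.2.1 _ hs₁ _ hs₂) hbc'p hkey
  exact ⟨hb' ▸ prim_unit_mul hS hb'p (isUnit_of_mul_isUnit_left hsu),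
    hc' ▸ prim_unit_mul hS hc'p (isUnit_of_mul_isUnit_right hsu)⟩

end Aux6d
section Aux6e

variable {R : Type*} [CommRing R] {M : Type*} [AddCommGroup M] [Module R M]
variable {S S' : Set R}

lemma irred_of_loc (hS : Saturated S) (hS' : Saturated S') (hSS' : S ⊆ S')
    (hsplit : Splits S (S' \ AnnSet R M))
    (hZM : S ∩ ZDiv R M = ∅) (hZR : S ∩ ZDiv R R = ∅)
    {a : R} (ha : a ∈ S' \ AnnSet R M) (ha0 : a ≠ 0) (haS : a ∉ S) (hap : SPrimitive S a)
    (kα : Fin 3) (hI : IrredOf kα (algebraMap R (Localization hS.submonoid) a)) :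
    IrredOf kα a := by
  have haU : ¬ IsUnit a := fun h => haS (sat_unit_mem hS h)
  have key : ∀ b c : R, a = b * c →
      (b ∈ S' \ AnnSet R M) ∧ b ≠ 0 ∧ SPrimitive S b ∧
      (c ∈ S' \ AnnSet R M) ∧ c ≠ 0 ∧ SPrimitive S c := by
    intro b c h
    have hbcE : b * c ∈ S' \ AnnSet R M := h ▸ ha
    obtain ⟨hbE, hcE⟩ := memE_of_mul hS' hbcE
    have hb0 : b ≠ 0 := by rintro rfl; rw [zero_mul] at h; exact ha0 h
    have hc0 : c ≠ 0 := by rintro rfl; rw [mul_zero] at h; exact ha0 h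
    obtain ⟨hbp, hcp⟩ := factor_prim hS hS' hSS' hsplit hZM hZR ha ha0 hap h
    exact ⟨hbE, hb0, hbp, hcE, hc0, hcp⟩
  fin_cases kα
  · replace hI : Irred (algebraMap R (Localization hS.submonoid) a) := hI
    refine ⟨haU, ?_⟩
    intro b c h
    obtain ⟨hbE, hb0, hbp, hcE, hc0, hcp⟩ := key b c h
    rcases hI.2 (algebraMap R (Localization hS.submonoid) b)
      (algebraMap R (Localization hS.submonoid) c) (by rw [← map_mul, ← h]) with hA | hA
    · exact Or.inl (transfer_assoc hS hS' hSS' hsplit hZM hZR ha ha0 hap hbE hb0 hbp hA)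
    · exact Or.inr (transfer_assoc hS hS' hSS' hsplit hZM hZR ha ha0 hap hcE hc0 hcp hA)
  · replace hI : StrongIrred (algebraMap R (Localization hS.submonoid) a) := hI
    refine ⟨haU, ?_⟩
    intro b c h
    obtain ⟨hbE, hb0, hbp, hcE, hc0, hcp⟩ := key b c h
    rcases hI.2 (algebraMap R (Localization hS.submonoid) b)
      (algebraMap R (Localization hS.submonoid) c) (by rw [← map_mul, ← h]) with hA | hA
    · exact Or.inl (transfer_strongassoc hS hS' hSS' hsplit hZM hZR ha ha0 hap hbE hbp hA)
    · exact Or.inr (transfer_strongassoc hS hS' hSS' hsplit hZM hZR ha ha0 hap hcE hcp hA)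
  · replace hI : VeryStrongIrred (algebraMap R (Localization hS.submonoid) a) := hI
    refine ⟨haU, ?_⟩
    intro b c h
    obtain ⟨hbE, hb0, hbp, hcE, hc0, hcp⟩ := key b c h
    rcases hI.2 (algebraMap R (Localization hS.submonoid) b)
      (algebraMap R (Localization hS.submonoid) c) (by rw [← map_mul, ← h]) with hA | hA
    · exact Or.inl (transfer_vsassoc hS hS' hSS' hsplit hZM hZR ha ha0 hap hbE hb0 hbp hA)
    · exact Or.inr (transfer_vsassoc hS hS' hSS' hsplit hZM hZR ha ha0 hap hcE hc0 hcp hA)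

end Aux6e
section Aux6f

variable {R : Type*} [CommRing R] {M : Type*} [AddCommGroup M] [Module R M]
variable {S S' : Set R}

lemma loc_factor_setup (hS : Saturated S) (hS' : Saturated S') (hSS' : S ⊆ S')
    (hsplit : Splits S (S' \ AnnSet R M))
    (hZM : S ∩ ZDiv R M = ∅) (hZR : S ∩ ZDiv R R = ∅)
    {a : R} (ha : a ∈ S' \ AnnSet R M) (ha0 : a ≠ 0) (hap : SPrimitive S a)
    {X Y : Localization hS.submonoid}
    (hXY : algebraMap R (Localization hS.submonoid) a = X * Y) :
    ∃ (y b₁ c₁ : R) (u₁ u₂ : (Localization hS.submonoid)ˣ),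
      y ∈ S ∧ SPrimitive S b₁ ∧ b₁ ∈ S' ∧ SPrimitive S c₁ ∧ c₁ ∈ S' ∧
      a = (y * b₁) * c₁ ∧
      X = ↑u₁ * algebraMap R (Localization hS.submonoid) b₁ ∧
      Y = ↑u₂ * algebraMap R (Localization hS.submonoid) c₁ := by
  obtain ⟨b, t₁, rfl⟩ := loc_surj hS X
  obtain ⟨c, t₂, rfl⟩ := loc_surj hS Y
  rw [Localization.mk_mul] at hXY
  have hbc := loc_ext' hS hZR hXY
  simp only [Submonoid.coe_mul] at hbc
  have ht : ((t₁ : R) * t₂) ∈ S := hS.2.1 _ t₁.2 _ t₂.2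
  have htaE : ((t₁ : R) * t₂) * a ∈ S' \ AnnSet R M := mul_memE hSS' hS' hZM ht ha
  have hbcE : b * c ∈ S' \ AnnSet R M := hbc ▸ htaE
  obtain ⟨hbE, hcE⟩ := memE_of_mul hS' hbcE
  have hta0 : ((t₁ : R) * t₂) * a ≠ 0 := fun h => ha0 (sat_nzd hZR ht a h)
  have hc0 : c ≠ 0 := by rintro rfl; rw [mul_zero] at hbc; exact hta0 hbc
  obtain ⟨s₂, c', hs₂, hc'p, hc'⟩ := hsplit.1.1 c hcE hc0
  rw [smul_eq_mul] at hc'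
  have hc'S' : c' ∈ S' := (hS'.2.2 _ _ (hc' ▸ hcE.1)).2
  have heq2 : ((t₁ : R) * t₂) * a = (b * s₂) * c' := by rw [hbc, hc']; ring
  obtain ⟨z, d', hzS, hd'p, hxa, hd⟩ :=
    lemK hS hS' hSS' hsplit hZM hZR ha ha0 hap hc'S' hc'p ht heq2
  have hd'S' : d' ∈ S' := by
    have hbs : b * s₂ ∈ S' := hS'.2.1 b hbE.1 s₂ (hSS' hs₂)
    exact (hS'.2.2 _ _ (hd ▸ hbs)).2
  have hu₁ : IsUnit (Localization.mk (z * ((t₁ : R) * t₂)) (t₁ * ⟨s₂, hs₂⟩) :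
      Localization hS.submonoid) := (unit_mk_iff hS hZR).mpr (hS.2.1 _ hzS _ ht)
  have hu₂ : IsUnit (Localization.mk s₂ t₂ : Localization hS.submonoid) :=
    (unit_mk_iff hS hZR).mpr hs₂
  refine ⟨z, d', c', hu₁.unit, hu₂.unit, hzS, hd'p, hd'S', hc'p, hc'S', hxa, ?_, ?_⟩
  · rw [IsUnit.unit_spec, ← Localization.mk_one_eq_algebraMap d', Localization.mk_mul,
      Localization.mk_eq_mk_iff, Localization.r_iff_exists]
    exact ⟨1, by push_cast; linear_combination (t₁ : R) * hd⟩
  · rw [IsUnit.unit_spec, ← Localization.mk_one_eq_algebraMap c', Localization.mk_mul,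
      Localization.mk_eq_mk_iff, Localization.r_iff_exists]
    exact ⟨1, by push_cast; linear_combination (t₂ : R) * hc'⟩

lemma assocX_of (hS : Saturated S) (hZR : S ∩ ZDiv R R = ∅) {a y b₁ p q : R} (hy : y ∈ S)
    (hp : a = p * (y * b₁)) (hq : y * b₁ = q * a)
    {u₁ : (Localization hS.submonoid)ˣ} {X : Localization hS.submonoid}
    (hX : X = ↑u₁ * algebraMap R (Localization hS.submonoid) b₁) :
    Assoc (algebraMap R (Localization hS.submonoid) a) X := by
  set φ := algebraMap R (Localization hS.submonoid) with hφ
  have huy : IsUnit (φ y) := (unit_map_iff hS hZR).mpr hy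
  refine ⟨⟨φ (p * y) * ↑u₁⁻¹, trivial, ?_⟩, ⟨↑u₁ * ↑huy.unit⁻¹ * φ q, trivial, ?_⟩⟩
  · rw [smul_eq_mul, hX]
    have h1 : (φ (p * y) * ↑u₁⁻¹) * (↑u₁ * φ b₁) = φ (p * y) * φ b₁ := by
      rw [mul_assoc, Units.inv_mul_cancel_left]
    rw [h1, ← map_mul]
    congr 1
    rw [hp]; ring
  · rw [smul_eq_mul, hX]
    have h1 : φ y * φ b₁ = φ q * φ a := by rw [← map_mul, ← map_mul, hq]
    have h2 : φ b₁ = ↑huy.unit⁻¹ * (φ q * φ a) := by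
      have h3 : (↑huy.unit⁻¹ : Localization hS.submonoid) * (↑huy.unit * φ b₁) = φ b₁ :=
        Units.inv_mul_cancel_left _ _
      rw [huy.unit_spec, h1] at h3
      exact h3.symm
    rw [h2]; ring
  
lemma assocY_of (hS : Saturated S) {a c₁ p q : R}
    (hp : a = p * c₁) (hq : c₁ = q * a)
    {u₂ : (Localization hS.submonoid)ˣ} {Y : Localization hS.submonoid}
    (hY : Y = ↑u₂ * algebraMap R (Localization hS.submonoid) c₁) :
    Assoc (algebraMap R (Localization hS.submonoid) a) Y := by
  set φ := algebraMap R (Localization hS.submonoid) with hφ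
  refine ⟨⟨φ p * ↑u₂⁻¹, trivial, ?_⟩, ⟨↑u₂ * φ q, trivial, ?_⟩⟩
  · rw [smul_eq_mul, hY]
    have h1 : (φ p * ↑u₂⁻¹) * (↑u₂ * φ c₁) = φ p * φ c₁ := by
      rw [mul_assoc, Units.inv_mul_cancel_left]
    rw [h1, ← map_mul, ← hp]
  · rw [smul_eq_mul, hY, hq, map_mul]; ring

lemma vs_half (hS : Saturated S) (hS' : Saturated S') (hSS' : S ⊆ S')
    (hsplit : Splits S (S' \ AnnSet R M))
    (hZM : S ∩ ZDiv R M = ∅) (hZR : S ∩ ZDiv R R = ∅)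
    {a m : R} (ha : a ∈ S' \ AnnSet R M) (ha0 : a ≠ 0) (hap : SPrimitive S a)
    (hm' : m ∈ S') (hmp : SPrimitive S m)
    (hkey : ∀ w : R, a = w * m → IsUnit w)
    {u : (Localization hS.submonoid)ˣ} {X : Localization hS.submonoid}
    (hX : X = ↑u * algebraMap R (Localization hS.submonoid) m) :
    ∀ W : Localization hS.submonoid,
      algebraMap R (Localization hS.submonoid) a = W * X → IsUnit W := by
  intro W hW
  obtain ⟨d₂, t₃, hrep⟩ := loc_surj hS (W * ↑u)
  have hWm : algebraMap R (Localization hS.submonoid) a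
      = Localization.mk (d₂ * m) (t₃ * 1) := by
    rw [hW, hX, ← mul_assoc, hrep, ← Localization.mk_one_eq_algebraMap m, Localization.mk_mul]
  have hta := loc_ext' hS hZR hWm
  simp only [Submonoid.coe_mul, Submonoid.coe_one, mul_one] at hta
  obtain ⟨z₂, d₂', hz₂S, hd₂'p, hxa, hd₂⟩ :=
    lemK hS hS' hSS' hsplit hZM hZR ha ha0 hap hm' hmp t₃.2 hta
  have hu' : IsUnit (z₂ * d₂') := hkey _ hxa
  have hd₂'S : d₂' ∈ S := sat_unit_mem hS (isUnit_of_mul_isUnit_right hu')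
  have hd₂S : d₂ ∈ S := by
    rw [hd₂]
    exact hS.2.1 _ (hS.2.1 _ hz₂S _ t₃.2) _ hd₂'S
  have hmk : IsUnit (Localization.mk d₂ t₃ : Localization hS.submonoid) :=
    (unit_mk_iff hS hZR).mpr hd₂S
  have hWeq : W = Localization.mk d₂ t₃ * ↑u⁻¹ := by
    rw [← hrep, mul_assoc, Units.mul_inv, mul_one]
  rw [hWeq]
  exact hmk.mul (Units.isUnit _)

end Aux6f
section Aux6g

variable {R : Type*} [CommRing R] {M : Type*} [AddCommGroup M] [Module R M]
variable {S S' : Set R}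

lemma loc_of_irred (hS : Saturated S) (hS' : Saturated S') (hSS' : S ⊆ S')
    (hsplit : Splits S (S' \ AnnSet R M))
    (hZM : S ∩ ZDiv R M = ∅) (hZR : S ∩ ZDiv R R = ∅)
    {a : R} (ha : a ∈ S' \ AnnSet R M) (ha0 : a ≠ 0) (haS : a ∉ S) (hap : SPrimitive S a)
    (kα : Fin 3) (hI : IrredOf kα a) :
    IrredOf kα (algebraMap R (Localization hS.submonoid) a) := by
  have haU : ¬ IsUnit (algebraMap R (Localization hS.submonoid) a) :=
    fun h => haS ((unit_map_iff hS hZR).mp h)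
  fin_cases kα
  · replace hI : Irred a := hI
    refine ⟨haU, ?_⟩
    intro X Y hXY
    obtain ⟨y, b₁, c₁, u₁, u₂, hy, hb₁p, hb₁S', hc₁p, hc₁S', hfac, hX, hY⟩ :=
      loc_factor_setup hS hS' hSS' hsplit hZM hZR ha ha0 hap hXY
    rcases hI.2 _ _ hfac with hA | hA
    · obtain ⟨⟨p, -, hp⟩, ⟨q, -, hq⟩⟩ := hA
      rw [smul_eq_mul] at hp hq
      exact Or.inl (assocX_of hS hZR hy hp hq hX)
    · obtain ⟨⟨p, -, hp⟩, ⟨q, -, hq⟩⟩ := hA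
      rw [smul_eq_mul] at hp hq
      exact Or.inr (assocY_of hS hp hq hY)
  · replace hI : StrongIrred a := hI
    refine ⟨haU, ?_⟩
    intro X Y hXY
    obtain ⟨y, b₁, c₁, u₁, u₂, hy, hb₁p, hb₁S', hc₁p, hc₁S', hfac, hX, hY⟩ :=
      loc_factor_setup hS hS' hSS' hsplit hZM hZR ha ha0 hap hXY
    rcases hI.2 _ _ hfac with hA | hA
    · obtain ⟨U, hUu, -, hU⟩ := hA
      rw [smul_eq_mul] at hU
      refine Or.inl ⟨algebraMap R (Localization hS.submonoid) (U * y) * ↑u₁⁻¹, ?_, trivial, ?_⟩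
      · refine IsUnit.mul ?_ (Units.isUnit _)
        rw [map_mul]
        exact (hUu.map _).mul ((unit_map_iff hS hZR).mpr hy)
      · rw [smul_eq_mul, hX]
        have h1 : (algebraMap R (Localization hS.submonoid) (U * y) * ↑u₁⁻¹) *
            (↑u₁ * algebraMap R (Localization hS.submonoid) b₁)
            = algebraMap R (Localization hS.submonoid) (U * y) *
              algebraMap R (Localization hS.submonoid) b₁ := by
          rw [mul_assoc, Units.inv_mul_cancel_left]
        rw [h1, ← map_mul]
        congr 1
        rw [hU]; ring
    · obtain ⟨U, hUu, -, hU⟩ := hA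
      rw [smul_eq_mul] at hU
      refine Or.inr ⟨algebraMap R (Localization hS.submonoid) U * ↑u₂⁻¹,
        (hUu.map _).mul (Units.isUnit _), trivial, ?_⟩
      rw [smul_eq_mul, hY]
      have h1 : (algebraMap R (Localization hS.submonoid) U * ↑u₂⁻¹) *
          (↑u₂ * algebraMap R (Localization hS.submonoid) c₁)
          = algebraMap R (Localization hS.submonoid) U *
            algebraMap R (Localization hS.submonoid) c₁ := by
        rw [mul_assoc, Units.inv_mul_cancel_left]
      rw [h1, ← map_mul, ← hU]
  · replace hI : VeryStrongIrred a := hI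
    have haU' : ¬ IsUnit a := fun h => haS (sat_unit_mem hS h)
    have hpre : ∀ w : R, a = w * a → IsUnit w := by
      rcases hI.2 a 1 (mul_one a).symm with hA | hA
      · rcases hA.2 with ⟨h0, -⟩ | hall
        · exact absurd h0 ha0
        · intro w hw; exact hall w trivial (by rw [smul_eq_mul]; exact hw)
      · obtain ⟨-, ⟨s, -, hs⟩⟩ := hA.1
        rw [smul_eq_mul] at hs
        exact absurd (IsUnit.of_mul_eq_one (a := a) s (by rw [mul_comm]; exact hs.symm)) haU'
    refine ⟨haU, ?_⟩
    intro X Y hXY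
    obtain ⟨y, b₁, c₁, u₁, u₂, hy, hb₁p, hb₁S', hc₁p, hc₁S', hfac, hX, hY⟩ :=
      loc_factor_setup hS hS' hSS' hsplit hZM hZR ha ha0 hap hXY
    rcases hI.2 _ _ hfac with hA | hA
    · obtain ⟨⟨⟨p, -, hp⟩, ⟨q, -, hq⟩⟩, hA2⟩ := hA
      rw [smul_eq_mul] at hp hq
      have hall : ∀ s : R, a = s * (y * b₁) → IsUnit s := by
        rcases hA2 with ⟨h0, -⟩ | hall
        · exact absurd h0 ha0
        · intro s hs; exact hall s trivial (by rw [smul_eq_mul]; exact hs)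
      have hpu : IsUnit p := hall p hp
      have hpyS : p * y ∈ S := hS.2.1 p (sat_unit_mem hS hpu) y hy
      obtain ⟨⟨s₅, hs₅, h5⟩, -⟩ := hap (p * y) hpyS b₁ (by rw [smul_eq_mul]; rw [hp]; ring)
      rw [smul_eq_mul] at h5
      have hkey : ∀ w : R, a = w * b₁ → IsUnit w := by
        intro w hw
        have hww : a = (w * s₅) * a := by linear_combination hw + w * h5
        exact isUnit_of_mul_isUnit_left (hpre _ hww)
      refine Or.inl ⟨assocX_of hS hZR hy hp hq hX, Or.inr ?_⟩
      intro W _ hW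
      exact vs_half hS hS' hSS' hsplit hZM hZR ha ha0 hap hb₁S' hb₁p hkey hX W
        (by rw [smul_eq_mul] at hW; exact hW)
    · obtain ⟨⟨⟨p, -, hp⟩, ⟨q, -, hq⟩⟩, hA2⟩ := hA
      rw [smul_eq_mul] at hp hq
      have hkey : ∀ w : R, a = w * c₁ → IsUnit w := by
        rcases hA2 with ⟨h0, -⟩ | hall
        · exact absurd h0 ha0
        · intro w hw; exact hall w trivial (by rw [smul_eq_mul]; exact hw)
      refine Or.inr ⟨assocY_of hS hp hq hY, Or.inr ?_⟩
      intro W _ hW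
      exact vs_half hS hS' hSS' hsplit hZM hZR ha ha0 hap hc₁S' hc₁p hkey hY W
        (by rw [smul_eq_mul] at hW; exact hW)

end Aux6g
section Aux6h

lemma irredOf_unit_mul_dir {A : Type*} [CommRing A] {u x : A} (hu : IsUnit u) (k : Fin 3)
    (h : IrredOf k x) : IrredOf k (u * x) := by
  obtain ⟨v, rfl⟩ := hu
  have hvv : (v : A) * ↑v⁻¹ = 1 := v.mul_inv
  have hfac : ∀ b c : A, (v : A) * x = b * c → x = (↑v⁻¹ * b) * c := by
    intro b c hbc
    have h1 : (↑v⁻¹ : A) * ((v : A) * x) = ↑v⁻¹ * (b * c) := by rw [hbc]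
    rw [Units.inv_mul_cancel_left] at h1
    rw [h1]; ring
  fin_cases k
  · replace h : Irred x := h
    refine ⟨fun hx => h.1 (isUnit_of_mul_isUnit_right hx), ?_⟩
    intro b c hbc
    rcases h.2 _ _ (hfac b c hbc) with hA | hA
    · obtain ⟨⟨p, -, hp⟩, ⟨q, -, hq⟩⟩ := hA
      rw [smul_eq_mul] at hp hq
      refine Or.inl ⟨⟨p, trivial, ?_⟩, ⟨q, trivial, ?_⟩⟩
      · rw [smul_eq_mul]; linear_combination (v : A) * hp + p * b * hvv
      · rw [smul_eq_mul]; linear_combination (v : A) * hq - b * hvv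
    · obtain ⟨⟨p, -, hp⟩, ⟨q, -, hq⟩⟩ := hA
      rw [smul_eq_mul] at hp hq
      refine Or.inr ⟨⟨(v : A) * p, trivial, ?_⟩, ⟨q * ↑v⁻¹, trivial, ?_⟩⟩
      · rw [smul_eq_mul]; linear_combination (v : A) * hp
      · rw [smul_eq_mul]; linear_combination hq - q * x * hvv
  · replace h : StrongIrred x := h
    refine ⟨fun hx => h.1 (isUnit_of_mul_isUnit_right hx), ?_⟩
    intro b c hbc
    rcases h.2 _ _ (hfac b c hbc) with hA | hA
    · obtain ⟨U, hUu, -, hU⟩ := hA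
      rw [smul_eq_mul] at hU
      refine Or.inl ⟨U, hUu, trivial, ?_⟩
      rw [smul_eq_mul]; linear_combination (v : A) * hU + U * b * hvv
    · obtain ⟨U, hUu, -, hU⟩ := hA
      rw [smul_eq_mul] at hU
      refine Or.inr ⟨(v : A) * U, v.isUnit.mul hUu, trivial, ?_⟩
      rw [smul_eq_mul]; linear_combination (v : A) * hU
  · replace h : VeryStrongIrred x := h
    refine ⟨fun hx => h.1 (isUnit_of_mul_isUnit_right hx), ?_⟩
    intro b c hbc
    rcases h.2 _ _ (hfac b c hbc) with hA | hA
    · obtain ⟨⟨⟨p, -, hp⟩, ⟨q, -, hq⟩⟩, hA2⟩ := hA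
      rw [smul_eq_mul] at hp hq
      refine Or.inl ⟨⟨⟨p, trivial, ?_⟩, ⟨q, trivial, ?_⟩⟩, ?_⟩
      · rw [smul_eq_mul]; linear_combination (v : A) * hp + p * b * hvv
      · rw [smul_eq_mul]; linear_combination (v : A) * hq - b * hvv
      · rcases hA2 with ⟨h0, h1⟩ | hall
        · refine Or.inl ⟨?_, ?_⟩
          · rw [h0, mul_zero]
          · have : b = (v : A) * (↑v⁻¹ * b) := by rw [Units.mul_inv_cancel_left]
            rw [this, h1, mul_zero]
        · refine Or.inr ?_
          intro s _ hs
          rw [smul_eq_mul] at hs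
          refine hall s trivial ?_
          rw [smul_eq_mul]
          linear_combination (↑v⁻¹ : A) * hs - x * hvv
    · obtain ⟨⟨⟨p, -, hp⟩, ⟨q, -, hq⟩⟩, hA2⟩ := hA
      rw [smul_eq_mul] at hp hq
      refine Or.inr ⟨⟨⟨(v : A) * p, trivial, ?_⟩, ⟨q * ↑v⁻¹, trivial, ?_⟩⟩, ?_⟩
      · rw [smul_eq_mul]; linear_combination (v : A) * hp
      · rw [smul_eq_mul]; linear_combination hq - q * x * hvv
      · rcases hA2 with ⟨h0, h1⟩ | hall
        · exact Or.inl ⟨by rw [h0, mul_zero], h1⟩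
        · refine Or.inr ?_
          intro s _ hs
          rw [smul_eq_mul] at hs
          have hx : x = (↑v⁻¹ * s) * c := by
            linear_combination (↑v⁻¹ : A) * hs - x * hvv
          have := hall _ trivial (by rw [smul_eq_mul]; exact hx)
          have hs' : s = (v : A) * (↑v⁻¹ * s) := by rw [Units.mul_inv_cancel_left]
          rw [hs']
          exact v.isUnit.mul this

lemma irredOf_unit_mul {A : Type*} [CommRing A] {u x : A} (hu : IsUnit u) (k : Fin 3) :
    IrredOf k (u * x) ↔ IrredOf k x := by
  constructor
  · intro h
    obtain ⟨v, rfl⟩ := hu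
    have := irredOf_unit_mul_dir (Units.isUnit v⁻¹) k h
    rwa [Units.inv_mul_cancel_left] at this
  · exact irredOf_unit_mul_dir hu k

end Aux6h
theorem statement6 {R : Type*} [CommRing R] {M : Type*} [AddCommGroup M] [Module R M]
    [Nontrivial M] (S S' : Set R) (hS : Saturated S) (hS' : Saturated S') (hSS' : S ⊆ S')
    (hsplit : Splits S (S' \ AnnSet R M))
    (hZM : S ∩ ZDiv R M = ∅) (hZR : S ∩ ZDiv R R = ∅)
    (kα : Fin 3) (r : R) (hr : r ∈ S' \ AnnSet R M) (hrS : r ∉ S)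
    (s a : R) (hfac : IsCompactFactorization S r s a) :
    IrredOf kα (algebraMap R (Localization hS.submonoid) r) ↔ IrredOf kα a := by
  obtain ⟨hsS, hap, hra⟩ := hfac
  rw [smul_eq_mul] at hra
  have haS' : a ∈ S' := (hS'.2.2 s a (by rw [← hra]; exact hr.1)).2
  have haAnn : a ∉ AnnSet R M := by
    intro h
    exact hr.2 (by rw [hra]; exact ann_mul_right s h)
  have haE : a ∈ S' \ AnnSet R M := ⟨haS', haAnn⟩
  have hr0 : r ≠ 0 := by
    rintro rfl
    exact hr.2 fun m => zero_smul R m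
  have ha0 : a ≠ 0 := by rintro rfl; rw [mul_zero] at hra; exact hr0 hra
  have haS : a ∉ S := by
    intro h
    exact hrS (by rw [hra]; exact hS.2.1 s hsS a h)
  have hsu : IsUnit (algebraMap R (Localization hS.submonoid) s) :=
    (unit_map_iff hS hZR).mpr hsS
  have hmap : algebraMap R (Localization hS.submonoid) r
      = algebraMap R (Localization hS.submonoid) s
        * algebraMap R (Localization hS.submonoid) a := by
    rw [← map_mul, hra]
  rw [hmap, irredOf_unit_mul hsu kα]
  constructor
  · exact irred_of_loc hS hS' hSS' hsplit hZM hZR haE ha0 haS hap kα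
  · exact loc_of_irred hS hS' hSS' hsplit hZM hZR haE ha0 haS hap kα

end FactorizationPaper
end
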